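/- arXiv:2512.09832 — 4 statements merged into one kernel-verified Lean document; each statement's English description precedes it below -/
import Mathlib

section
/- Let S and T be sets of natural numbers each at least 3, and let D_S and D_T be the disjoint unions of the cycle graphs indexed by S and T respectively. Then there exists a graph embedding of D_S into D_T if and only if S ⊆ T. In particular, if S ≠ T then D_S and D_T are not isomorphic, so there are continuum many pairwise non-isomorphic, pairwise non-embeddable such graphs. -/
open SimpleGraph

/-- The disjoint union of the cycle graphs `C_s` for `s ∈ S`: the simple graph on the sigma
type `Σ s : S, Fin s` in which two vertices are adjacent iff they lie in the same summand
`s` and are adjacent in `cycleGraph s`. -/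
def cyclesDisjointUnion (S : Set ℕ) : SimpleGraph (Σ s : S, Fin (s : ℕ)) where
  Adj x y := ∃ h : (x.1 : ℕ) = (y.1 : ℕ), (cycleGraph (y.1 : ℕ)).Adj (Fin.cast h x.2) y.2
  symm := by
    constructor
    rintro ⟨⟨s, hs⟩, i⟩ ⟨⟨t, ht⟩, j⟩ ⟨h, hadj⟩
    dsimp only at h
    subst h
    exact ⟨rfl, by simpa [Fin.ext_iff] using hadj.symm⟩
  loopless := by
    constructor
    rintro ⟨⟨s, hs⟩, i⟩ ⟨h, hadj⟩
    have : Fin.cast h i = i := by ext; rfl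
    rw [this] at hadj
    exact (cycleGraph s).irrefl hadj


private lemma cycleGraph_adj_iff'' {n : ℕ} [NeZero n] (hn : 3 ≤ n) {u v : Fin n} :
    (cycleGraph n).Adj u v ↔ u - v = 1 ∨ v - u = 1 := by
  rw [cycleGraph_adj']
  have h1 : (1 : Fin n).val = 1 := by
    rw [Fin.val_one']; exact Nat.mod_eq_of_lt (by omega)
  constructor
  · rintro (h | h)
    · exact Or.inl (Fin.ext (by rw [h1]; exact h))
    · exact Or.inr (Fin.ext (by rw [h1]; exact h))
  · rintro (h | h)
    · exact Or.inl (by rw [h, h1])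
    · exact Or.inr (by rw [h, h1])

open Fin.CommRing in
private lemma cycle_card_eq {s t : ℕ} (hs : 3 ≤ s) (ht : 3 ≤ t)
    (g : Fin s → Fin t) (hinj : Function.Injective g)
    (hadj : ∀ i j, (cycleGraph s).Adj i j ↔ (cycleGraph t).Adj (g i) (g j)) :
    s = t := by
  haveI : NeZero s := ⟨by omega⟩
  haveI : NeZero t := ⟨by omega⟩
  have hadj_succ : ∀ i : Fin s, (cycleGraph s).Adj i (i + 1) := fun i => by
    rw [cycleGraph_adj_iff'' hs]
    right
    rw [add_sub_cancel_left]
  have hadj_pred : ∀ i : Fin s, (cycleGraph s).Adj i (i - 1) := fun i => by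
    rw [cycleGraph_adj_iff'' hs]
    left
    rw [sub_sub_cancel]
  have hne : ∀ i : Fin s, i + 1 ≠ i - 1 := by
    intro i h
    have h2 : (1 : Fin s) + 1 = 0 := by linear_combination h
    have hv := congrArg Fin.val h2
    rw [Fin.val_add, Fin.val_one', Fin.val_zero] at hv
    have e1 : 1 % s = 1 := Nat.mod_eq_of_lt (by omega)
    rw [e1] at hv
    have e2 : (1 + 1) % s = 2 := Nat.mod_eq_of_lt (by omega)
    omega
  have hclo : ∀ i : Fin s, ∃ j, g j = g i + 1 := by
    intro i
    have h1 := (hadj i (i + 1)).mp (hadj_succ i)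
    have h2 := (hadj i (i - 1)).mp (hadj_pred i)
    rw [cycleGraph_adj_iff'' ht] at h1 h2
    have e1 : g (i + 1) = g i - 1 ∨ g (i + 1) = g i + 1 := by
      rcases h1 with h | h
      · exact Or.inl (by linear_combination -h)
      · exact Or.inr (by linear_combination h)
    have e2 : g (i - 1) = g i - 1 ∨ g (i - 1) = g i + 1 := by
      rcases h2 with h | h
      · exact Or.inl (by linear_combination -h)
      · exact Or.inr (by linear_combination h)
    rcases e1 with h | h
    · rcases e2 with h' | h'
      · exact absurd (hinj (h.trans h'.symm)) (hne i)
      · exact ⟨i - 1, h'⟩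
    · exact ⟨i + 1, h⟩
  have hsurj : Function.Surjective g := by
    have key : ∀ k : ℕ, ∃ j, g j = g 0 + (k : Fin t) := by
      intro k
      induction k with
      | zero => exact ⟨0, by simp⟩
      | succ k ih =>
        obtain ⟨j, hj⟩ := ih
        obtain ⟨j', hj'⟩ := hclo j
        refine ⟨j', ?_⟩
        rw [hj', hj]
        push_cast
        ring
    intro x
    obtain ⟨j, hj⟩ := key ((x - g 0).val)
    refine ⟨j, ?_⟩
    rw [hj, Fin.cast_val_eq_self]
    ring
  have := Fintype.card_of_bijective ⟨hinj, hsurj⟩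
  simpa using this

private lemma cdu_adj_same {S : Set ℕ} (s : S) (i j : Fin (s : ℕ)) :
    (cyclesDisjointUnion S).Adj ⟨s, i⟩ ⟨s, j⟩ ↔ (cycleGraph (s : ℕ)).Adj i j :=
  ⟨fun ⟨_, h⟩ => h, fun h => ⟨rfl, h⟩⟩

private lemma cdu_adj_iff {T : Set ℕ} (x y : Σ t : T, Fin (t : ℕ)) (t : ℕ)
    (hx : (x.1 : ℕ) = t) (hy : (y.1 : ℕ) = t) :
    (cyclesDisjointUnion T).Adj x y ↔
      (cycleGraph t).Adj (Fin.cast hx x.2) (Fin.cast hy y.2) := by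
  obtain ⟨⟨a, ha⟩, i⟩ := x
  obtain ⟨⟨b, hb⟩, j⟩ := y
  dsimp only at hx hy ⊢
  subst hx
  subst hy
  exact ⟨fun ⟨_, h⟩ => h, fun h => ⟨rfl, h⟩⟩

private lemma cdu_emb_subset {S T : Set ℕ} (hS : ∀ s ∈ S, 3 ≤ s) (hT : ∀ t ∈ T, 3 ≤ t)
    (f : cyclesDisjointUnion S ↪g cyclesDisjointUnion T) : S ⊆ T := by
  intro s hsS
  have hs3 := hS s hsS
  haveI : NeZero s := ⟨by omega⟩
  have step : ∀ {a b : Fin s}, (cycleGraph s).Adj a b →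
      ((f ⟨⟨s, hsS⟩, a⟩).1 : ℕ) = ((f ⟨⟨s, hsS⟩, b⟩).1 : ℕ) := by
    intro a b hab
    have h1 : (cyclesDisjointUnion S).Adj ⟨⟨s, hsS⟩, a⟩ ⟨⟨s, hsS⟩, b⟩ :=
      (cdu_adj_same ⟨s, hsS⟩ a b).mpr hab
    obtain ⟨h, -⟩ := f.map_rel_iff.mpr h1
    exact h
  have hsame : ∀ a b : Fin s, ((f ⟨⟨s, hsS⟩, a⟩).1 : ℕ) = ((f ⟨⟨s, hsS⟩, b⟩).1 : ℕ) := by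
    intro a b
    obtain ⟨w⟩ := (cycleGraph_preconnected a b : (cycleGraph s).Reachable a b)
    induction w with
    | nil => rfl
    | cons h p ih => exact (step h).trans ih
  set t : T := (f ⟨⟨s, hsS⟩, 0⟩).1 with ht_def
  have hsame' : ∀ i : Fin s, ((f ⟨⟨s, hsS⟩, i⟩).1 : ℕ) = (t : ℕ) := fun i => hsame i 0
  set g : Fin s → Fin (t : ℕ) := fun i => Fin.cast (hsame' i) (f ⟨⟨s, hsS⟩, i⟩).2 with hg
  have hginj : Function.Injective g := by
    intro i j h
    have hfst : (f ⟨⟨s, hsS⟩, i⟩).1 = (f ⟨⟨s, hsS⟩, j⟩).1 :=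
      Subtype.ext ((hsame' i).trans (hsame' j).symm)
    have hsnd : HEq (f ⟨⟨s, hsS⟩, i⟩).2 (f ⟨⟨s, hsS⟩, j⟩).2 := by
      refine (Fin.heq_ext_iff ?_).mpr ?_
      · exact (hsame' i).trans (hsame' j).symm
      · exact congrArg Fin.val h
    have := f.injective (Sigma.ext hfst hsnd)
    simpa using this
  have hgadj : ∀ i j, (cycleGraph s).Adj i j ↔ (cycleGraph (t : ℕ)).Adj (g i) (g j) := by
    intro i j
    calc (cycleGraph s).Adj i j
        ↔ (cyclesDisjointUnion S).Adj ⟨⟨s, hsS⟩, i⟩ ⟨⟨s, hsS⟩, j⟩ :=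
          (cdu_adj_same ⟨s, hsS⟩ i j).symm
      _ ↔ (cyclesDisjointUnion T).Adj (f ⟨⟨s, hsS⟩, i⟩) (f ⟨⟨s, hsS⟩, j⟩) :=
          f.map_rel_iff.symm
      _ ↔ (cycleGraph (t : ℕ)).Adj (g i) (g j) :=
          cdu_adj_iff _ _ (t : ℕ) (hsame' i) (hsame' j)
  have : s = (t : ℕ) := cycle_card_eq hs3 (hT t t.2) g hginj hgadj
  rw [this]
  exact t.2

private def cdu_emb_of_subset {S T : Set ℕ} (hsub : S ⊆ T) :
    cyclesDisjointUnion S ↪g cyclesDisjointUnion T where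
  toFun x := ⟨⟨x.1.1, hsub x.1.2⟩, x.2⟩
  inj' := by
    rintro ⟨⟨s, hs⟩, i⟩ ⟨⟨s', hs'⟩, i'⟩ h
    rw [Sigma.ext_iff] at h
    obtain ⟨h1, h2⟩ := h
    simp only [Subtype.mk.injEq] at h1
    subst h1
    rw [Sigma.ext_iff]
    exact ⟨rfl, h2⟩
  map_rel_iff' := by
    rintro ⟨⟨s, hs⟩, i⟩ ⟨⟨s', hs'⟩, i'⟩
    exact Iff.rfl

/-- For sets `S`, `T` of naturals each at least 3, the disjoint union of
cycles `D_S` embeds into `D_T` iff `S ⊆ T`; in particular, if `S ≠ T` then `D_S` and `D_T`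
are not isomorphic (whence there are continuum many pairwise non-isomorphic, pairwise
non-embeddable such graphs). -/
theorem cyclesDisjointUnion_embedding_iff_subset (S T : Set ℕ)
    (hS : ∀ s ∈ S, 3 ≤ s) (hT : ∀ t ∈ T, 3 ≤ t) :
    (Nonempty (cyclesDisjointUnion S ↪g cyclesDisjointUnion T) ↔ S ⊆ T) ∧
      (S ≠ T → ¬ Nonempty (cyclesDisjointUnion S ≃g cyclesDisjointUnion T)) := by
  constructor
  · constructor
    · rintro ⟨f⟩
      exact cdu_emb_subset hS hT f
    · intro hsub
      exact ⟨cdu_emb_of_subset hsub⟩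
  · rintro hne ⟨e⟩
    exact hne (Set.Subset.antisymm (cdu_emb_subset hS hT e.toEmbedding)
      (cdu_emb_subset hT hS e.symm.toEmbedding))
end

section
/- Let G be a simple graph on a countable vertex type with no induced subgraph isomorphic to pathGraph 4 (a cograph), and let u ≠ v be vertices of G. Then for every vertex w, w belongs to M(u,v), the least module containing u and v, if and only if one of the following holds: (1) w = u or w = v; (2) w witnesses that {u,v} is not a module; or (3) there exists a vertex w' with w' ≠ u and w' ≠ v such that w' witnesses that {u,v} is not a module and w witnesses that {u,w'} is not a module or that {v,w'} is not a module. -/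
open SimpleGraph

/-- A *module* of a simple graph `G` is a set `A` of vertices such that for all
`u, v ∈ A` and `w ∉ A`, `w` is adjacent to `u` iff `w` is adjacent to `v`. -/
def SimpleGraph.IsModule {V : Type*} (G : SimpleGraph V) (A : Set V) : Prop :=
  ∀ u ∈ A, ∀ v ∈ A, ∀ w ∉ A, (G.Adj w u ↔ G.Adj w v)

/-- `M(u,v)`: the intersection of all modules of `G` containing both `u` and `v`
(the least module containing `u` and `v`). -/
def SimpleGraph.minModule {V : Type*} (G : SimpleGraph V) (u v : V) : Set V :=
  ⋂₀ {A : Set V | G.IsModule A ∧ u ∈ A ∧ v ∈ A}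

/-- `w` *witnesses* that `{x, y}` is not a module: `w ≠ x`, `w ≠ y`, and `w` is adjacent
to exactly one of `x` and `y`. -/
def SimpleGraph.WitnessesNotModule {V : Type*} (G : SimpleGraph V) (w x y : V) : Prop :=
  w ≠ x ∧ w ≠ y ∧ ((G.Adj w x ∧ ¬ G.Adj w y) ∨ (¬ G.Adj w x ∧ G.Adj w y))

private lemma not_iff_xor' (p q : Prop) (h : ¬ (p ↔ q)) : (p ∧ ¬ q) ∨ (¬ p ∧ q) := by
  tauto

private lemma exists_p4 {V : Type*} (G : SimpleGraph V) (a b c d : V)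
    (hab : G.Adj a b) (hbc : G.Adj b c) (hcd : G.Adj c d)
    (hac : ¬ G.Adj a c) (had : ¬ G.Adj a d) (hbd : ¬ G.Adj b d) :
    Nonempty (pathGraph 4 ↪g G) := by
  have hab' : a ≠ b := hab.ne
  have hbc' : b ≠ c := hbc.ne
  have hcd' : c ≠ d := hcd.ne
  have hac' : a ≠ c := fun h => had (h ▸ hcd)
  have had' : a ≠ d := fun h => hbd (h ▸ hab).symm
  have hbd' : b ≠ d := fun h => had (h ▸ hab)
  refine ⟨⟨⟨![a,b,c,d], ?_⟩, ?_⟩⟩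
  · intro i j hij
    fin_cases i <;> fin_cases j <;> simp_all
  · intro i j
    show G.Adj (![a,b,c,d] i) (![a,b,c,d] j) ↔ _
    have hba := hab.symm
    have hcb := hbc.symm
    have hdc := hcd.symm
    have hca : ¬ G.Adj c a := fun h => hac h.symm
    have hda : ¬ G.Adj d a := fun h => had h.symm
    have hdb : ¬ G.Adj d b := fun h => hbd h.symm
    fin_cases i <;> fin_cases j <;>
      simp_all [pathGraph_adj] <;> decide

private lemma crux {V : Type*} (G : SimpleGraph V)
    (hfree : ¬ Nonempty (pathGraph 4 ↪g G)) (u v w' x z : V)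
    (hw' : (G.Adj w' u ∧ ¬ G.Adj w' v) ∨ (¬ G.Adj w' u ∧ G.Adj w' v))
    (hxuv : G.Adj x u ↔ G.Adj x v)
    (hxw : (G.Adj x u ∧ ¬ G.Adj x w') ∨ (¬ G.Adj x u ∧ G.Adj x w'))
    (hz1 : G.Adj z u ↔ G.Adj z v) (hz2 : G.Adj z u ↔ G.Adj z w') :
    G.Adj z u ↔ G.Adj z x := by
  by_contra h
  apply hfree
  have hzc : (G.Adj z u ∧ G.Adj z v ∧ G.Adj z w' ∧ ¬ G.Adj z x) ∨
      (¬ G.Adj z u ∧ ¬ G.Adj z v ∧ ¬ G.Adj z w' ∧ G.Adj z x) := by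
    by_cases hA : G.Adj z u
    · exact Or.inl ⟨hA, hz1.mp hA, hz2.mp hA, fun hx => h (iff_of_true hA hx)⟩
    · refine Or.inr ⟨hA, fun hh => hA (hz1.mpr hh), fun hh => hA (hz2.mpr hh), ?_⟩
      by_contra hx; exact h (iff_of_false hA hx)
  rcases hw' with ⟨o1, o2⟩ | ⟨o1, o2⟩ <;> rcases hxw with ⟨x1, x2⟩ | ⟨x1, x2⟩
  · have x3 : G.Adj x v := hxuv.mp x1
    by_cases huv : G.Adj u v
    · rcases hzc with ⟨z1, z2, z3, z4⟩ | ⟨z1, z2, z3, z4⟩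
      · exact exists_p4 G x v z w' x3 z2.symm z3
          (fun hh => z4 hh.symm) (fun hh => x2 hh) (fun hh => o2 hh.symm)
      · exact exists_p4 G z x u w' z4 x1 o1.symm z1 z3 x2
    · exact exists_p4 G w' u x v o1 x1.symm x3
        (fun hh => x2 hh.symm) o2 huv
  · have x3 : ¬ G.Adj x v := fun hh => x1 (hxuv.mpr hh)
    by_cases huv : G.Adj u v
    · exact exists_p4 G x w' u v x2 o1 huv x1 x3 o2
    · rcases hzc with ⟨z1, z2, z3, z4⟩ | ⟨z1, z2, z3, z4⟩
      · exact exists_p4 G v z w' x z2.symm z3 x2.symm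
          (fun hh => o2 hh.symm) (fun hh => x3 hh.symm) z4
      · exact exists_p4 G z x w' u z4 x2 o1 z3 z1 x1
  · have x3 : G.Adj x v := hxuv.mp x1
    by_cases huv : G.Adj u v
    · rcases hzc with ⟨z1, z2, z3, z4⟩ | ⟨z1, z2, z3, z4⟩
      · exact exists_p4 G x u z w' x1 z1.symm z3
          (fun hh => z4 hh.symm) x2 (fun hh => o1 hh.symm)
      · exact exists_p4 G z x v w' z4 x3 o2.symm z2 z3 x2
    · exact exists_p4 G w' v x u o2 x3.symm x1
        (fun hh => x2 hh.symm) o1 (fun hh => huv hh.symm)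
  · have x3 : ¬ G.Adj x v := fun hh => x1 (hxuv.mpr hh)
    by_cases huv : G.Adj u v
    · exact exists_p4 G x w' v u x2 o2 huv.symm x3 x1 o1
    · rcases hzc with ⟨z1, z2, z3, z4⟩ | ⟨z1, z2, z3, z4⟩
      · exact exists_p4 G u z w' x z1.symm z3 x2.symm
          (fun hh => o1 hh.symm) (fun hh => x1 hh.symm) z4
      · exact exists_p4 G z x w' v z4 x2 o2 z3 z2 x3

/-- Let `G` be a cograph (a `pathGraph 4`-free simple graph) on a
countable vertex type and `u ≠ v`. Then `w ∈ M(u,v)` iff (1) `w = u` or `w = v`, or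
(2) `w` witnesses that `{u,v}` is not a module, or (3) there is `w' ≠ u, v` witnessing
that `{u,v}` is not a module such that `w` witnesses that `{u,w'}` or `{v,w'}` is not a
module. -/
theorem mem_minModule_iff_of_p4Free {V : Type*} [Countable V] (G : SimpleGraph V)
    (hfree : ¬ Nonempty (pathGraph 4 ↪g G)) (u v : V) (huv : u ≠ v) (w : V) :
    w ∈ G.minModule u v ↔
      (w = u ∨ w = v) ∨
      G.WitnessesNotModule w u v ∨
      (∃ w', w' ≠ u ∧ w' ≠ v ∧ G.WitnessesNotModule w' u v ∧
        (G.WitnessesNotModule w u w' ∨ G.WitnessesNotModule w v w')) := by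
  classical
  constructor
  · intro hw
    refine Set.mem_sInter.mp hw {x | (x = u ∨ x = v) ∨ G.WitnessesNotModule x u v ∨
      (∃ w', w' ≠ u ∧ w' ≠ v ∧ G.WitnessesNotModule w' u v ∧
        (G.WitnessesNotModule x u w' ∨ G.WitnessesNotModule x v w'))}
      ⟨?_, Or.inl (Or.inl rfl), Or.inl (Or.inr rfl)⟩
    -- the candidate set is a module
    have key : ∀ z, z ∉ {x | (x = u ∨ x = v) ∨ G.WitnessesNotModule x u v ∨
        (∃ w', w' ≠ u ∧ w' ≠ v ∧ G.WitnessesNotModule w' u v ∧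
          (G.WitnessesNotModule x u w' ∨ G.WitnessesNotModule x v w'))} →
        ∀ x, x ∈ {x | (x = u ∨ x = v) ∨ G.WitnessesNotModule x u v ∨
        (∃ w', w' ≠ u ∧ w' ≠ v ∧ G.WitnessesNotModule w' u v ∧
          (G.WitnessesNotModule x u w' ∨ G.WitnessesNotModule x v w'))} →
        (G.Adj z x ↔ G.Adj z u) := by
      intro z hz x hx
      have hzu : z ≠ u := fun h => hz (Or.inl (Or.inl h))
      have hzv : z ≠ v := fun h => hz (Or.inl (Or.inr h))
      have hzW : ¬ G.WitnessesNotModule z u v := fun h => hz (Or.inr (Or.inl h))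
      have hzuv : G.Adj z u ↔ G.Adj z v := by
        by_contra hh
        exact hzW ⟨hzu, hzv, not_iff_xor' _ _ hh⟩
      have hW1 : ∀ w'', w'' ≠ u → w'' ≠ v → G.WitnessesNotModule w'' u v →
          (G.Adj z u ↔ G.Adj z w'') ∧ (G.Adj z v ↔ G.Adj z w'') := by
        intro w'' h1 h2 h3
        have hzw'' : z ≠ w'' := fun h => hz (by rw [h]; exact Or.inr (Or.inl h3))
        have hnex : ¬ (G.WitnessesNotModule z u w'' ∨ G.WitnessesNotModule z v w'') :=
          fun h => hz (Or.inr (Or.inr ⟨w'', h1, h2, h3, h⟩))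
        constructor
        · by_contra hh
          exact hnex (Or.inl ⟨hzu, hzw'', not_iff_xor' _ _ hh⟩)
        · by_contra hh
          exact hnex (Or.inr ⟨hzv, hzw'', not_iff_xor' _ _ hh⟩)
      rcases hx with (rfl | rfl) | hxW | ⟨w', h1, h2, h3, h4⟩
      · exact Iff.rfl
      · exact hzuv.symm
      · exact (hW1 x hxW.1 hxW.2.1 hxW).1.symm
      · obtain ⟨hzw1, hzw2⟩ := hW1 w' h1 h2 h3
        by_cases hxv : x = v
        · subst hxv; exact hzuv.symm
        by_cases hxu : x = u
        · subst hxu; exact Iff.rfl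
        by_cases hxWuv : G.WitnessesNotModule x u v
        · exact (hW1 x hxu hxv hxWuv).1.symm
        · have hxuv : G.Adj x u ↔ G.Adj x v := by
            by_contra hh
            exact hxWuv ⟨hxu, hxv, not_iff_xor' _ _ hh⟩
          rcases h4 with hxw | hxw
          · exact (crux G hfree u v w' x z h3.2.2 hxuv hxw.2.2 hzuv hzw1).symm
          · have := crux G hfree v u w' x z
              (h3.2.2.symm.imp And.symm And.symm) hxuv.symm hxw.2.2 hzuv.symm hzw2
            exact this.symm.trans hzuv.symm
    intro a ha b hb z hz
    exact (key z hz a ha).trans (key z hz b hb).symm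
  · intro h
    refine Set.mem_sInter.mpr ?_
    rintro A ⟨hAmod, hAu, hAv⟩
    have memA : ∀ y, G.WitnessesNotModule y u v → y ∈ A := by
      intro y hy
      by_contra hyA
      have := hAmod u hAu v hAv y hyA
      rcases hy.2.2 with ⟨a, b⟩ | ⟨a, b⟩ <;> tauto
    rcases h with (rfl | rfl) | hW | ⟨w', h1, h2, h3, h4⟩
    · exact hAu
    · exact hAv
    · exact memA w hW
    · have hw'A := memA w' h3
      by_contra hwA
      rcases h4 with hw4 | hw4
      · have := hAmod u hAu w' hw'A w hwA
        rcases hw4.2.2 with ⟨a, b⟩ | ⟨a, b⟩ <;> tauto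
      · have := hAmod v hAv w' hw'A w hwA
        rcases hw4.2.2 with ⟨a, b⟩ | ⟨a, b⟩ <;> tauto
end

section
/- For every simple graph G on a countable vertex type with no induced subgraph isomorphic to pathGraph 4 (a cograph), the automorphism group of G is not isomorphic, as a group, to the cyclic group of order 3 (ℤ/3ℤ). -/
open SimpleGraph

namespace AutCograph

variable {V : Type*} {G : SimpleGraph V}

/-- `Φ φ d` is `φ^d` for `d : ZMod 3`. -/
def Φ (φ : G ≃g G) (d : ZMod 3) : G ≃g G := φ ^ d.val

section basic
variable (φ : G ≃g G) (hφ3 : φ ^ 3 = 1)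
include hφ3

theorem pow_mod3 (n : ℕ) : φ ^ n = φ ^ (n % 3) := by
  conv_lhs => rw [← Nat.div_add_mod n 3]
  rw [pow_add, pow_mul, hφ3, one_pow, one_mul]

theorem Φ_add (a b : ZMod 3) : Φ φ (a + b) = Φ φ a * Φ φ b := by
  unfold Φ
  rw [← pow_add, pow_mod3 φ hφ3 (a.val + b.val), eq_comm, pow_mod3 φ hφ3]
  congr 1
  have h1 : (a+b).val % 3 = (a+b).val := Nat.mod_eq_of_lt (a+b).val_lt
  have h2 := ZMod.val_add a b
  omega

omit hφ3 in
theorem Φ_zero : Φ φ 0 = 1 := by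
  unfold Φ; simp [ZMod.val_zero]

theorem Φ_apply_add (a b : ZMod 3) (x : V) : Φ φ (a + b) x = Φ φ a (Φ φ b x) := by
  rw [Φ_add φ hφ3]; rfl

omit hφ3 in
theorem Φ_one_apply (x : V) : Φ φ 1 x = φ x := by
  show (φ ^ (1 : ZMod 3).val) x = φ x
  rw [show ((1:ZMod 3)).val = 1 from rfl, pow_one]

omit hφ3 in
theorem Φ_zero_apply (x : V) : Φ φ 0 x = x := by
  show (φ ^ (0 : ZMod 3).val) x = x
  rw [show ((0:ZMod 3)).val = 0 from rfl, pow_zero]; rfl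

omit hφ3 in
theorem Φ_adj {a : ZMod 3} {x y : V} :
    G.Adj (Φ φ a x) (Φ φ a y) ↔ G.Adj x y := by
  unfold Φ; exact (φ ^ a.val).map_adj_iff

/-- the fundamental adjacency shift property -/
theorem adj_shift (a b : ZMod 3) (x y : V) :
    G.Adj (Φ φ a x) (Φ φ b y) ↔ G.Adj x (Φ φ (b - a) y) := by
  have : Φ φ b y = Φ φ a (Φ φ (b - a) y) := by
    rw [← Φ_apply_add φ hφ3]; congr 1; ring
  rw [this]; exact Φ_adj φ

end basic

section orbits
variable (φ : G ≃g G) (hφ3 : φ ^ 3 = 1)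

/-- orbit relation -/
def R (u v : V) : Prop := ∃ d : ZMod 3, Φ φ d u = v

variable {φ}

theorem R_refl (u : V) : R φ u u := ⟨0, Φ_zero_apply φ u⟩

include hφ3

theorem R_symm {u v : V} (h : R φ u v) : R φ v u := by
  obtain ⟨d, rfl⟩ := h
  exact ⟨-d, by rw [← Φ_apply_add φ hφ3, neg_add_cancel, Φ_zero_apply]⟩

theorem R_trans {u v w : V} (h : R φ u v) (h' : R φ v w) : R φ u w := by
  obtain ⟨d, rfl⟩ := h; obtain ⟨e, rfl⟩ := h'
  exact ⟨e + d, by rw [Φ_apply_add φ hφ3]⟩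

variable (φ)

/-- the setoid of orbits -/
def orbSetoid : Setoid V := ⟨R φ, ⟨R_refl, fun h => R_symm hφ3 h, fun h h' => R_trans hφ3 h h'⟩⟩

/-- orbit representative -/
noncomputable def rep (v : V) : V := (Quotient.mk (orbSetoid φ hφ3) v).out

variable {φ}

theorem rep_spec (v : V) : R φ (rep φ hφ3 v) v := by
  have : Quotient.mk (orbSetoid φ hφ3) (rep φ hφ3 v) = Quotient.mk (orbSetoid φ hφ3) v :=
    Quotient.out_eq _
  exact Quotient.exact this

theorem rep_eq_of_R {u v : V} (h : R φ u v) : rep φ hφ3 u = rep φ hφ3 v := by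
  unfold rep; congr 1; exact Quotient.sound h

theorem rep_rep (v : V) : rep φ hφ3 (rep φ hφ3 v) = rep φ hφ3 v :=
  rep_eq_of_R hφ3 (rep_spec hφ3 v)

/-- on a 3-orbit, Φ is injective -/
theorem Φ_inj {u : V} (hu : φ u ≠ u) {a b : ZMod 3} (h : Φ φ a u = Φ φ b u) : a = b := by
  by_contra hne
  have h2 : Φ φ (a - b) u = u := by
    have h3 := congrArg (Φ φ (-b)) h
    rw [← Φ_apply_add φ hφ3, ← Φ_apply_add φ hφ3, neg_add_cancel, Φ_zero_apply] at h3
    rw [sub_eq_add_neg, add_comm]; exact h3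
  set d := a - b with hd
  have hdne : d ≠ 0 := sub_ne_zero.mpr hne
  have hcases : d = 1 ∨ d = 2 := by
    have h4 : ∀ x : ZMod 3, x = 0 ∨ x = 1 ∨ x = 2 := by decide
    rcases h4 d with h | h | h
    · exact absurd h hdne
    · exact Or.inl h
    · exact Or.inr h
  rcases hcases with h | h
  · rw [h, Φ_one_apply] at h2; exact hu h2
  · rw [h] at h2
    have h3 : Φ φ 1 (Φ φ 2 u) = Φ φ 1 u := congrArg (Φ φ 1) h2
    rw [← Φ_apply_add φ hφ3] at h3
    rw [show (1 + 2 : ZMod 3) = 0 from by decide, Φ_zero_apply, Φ_one_apply] at h3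
    exact hu h3.symm

theorem moved_of_R {u v : V} (hu : φ u ≠ u) (h : R φ u v) : φ v ≠ v := by
  obtain ⟨d, rfl⟩ := h
  intro hfix
  apply hu
  have h1 : Φ φ 1 (Φ φ d u) = Φ φ d u := by rw [Φ_one_apply]; exact hfix
  rw [← Φ_apply_add φ hφ3] at h1
  have h2 := Φ_inj hφ3 hu h1
  simp at h2

omit hφ3 in
theorem fixed_Φ {v : V} (hv : φ v = v) (d : ZMod 3) : Φ φ d v = v := by
  show (φ ^ d.val) v = v
  induction d.val with
  | zero => rfl
  | succ n ih => rw [pow_succ]; show (φ^n) (φ v) = v; rw [hv]; exact ih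

theorem ne_of_not_R {x y : V} (h : ¬ R φ x y) (a b : ZMod 3) : Φ φ a x ≠ Φ φ b y := by
  intro heq
  apply h
  refine R_trans hφ3 ⟨a, heq⟩ (R_symm hφ3 ⟨b, rfl⟩)

end orbits
variable {V : Type*} {G : SimpleGraph V}

theorem zmod3_cases : ∀ d : ZMod 3, d = 0 ∨ d = 1 ∨ d = 2 := by decide

section pairsdef
variable (φ : G ≃g G)

/-- fully adjacent pair of orbits -/
def FullP (u v : V) : Prop := ∀ d : ZMod 3, G.Adj u ((Φ φ d) v)

/-- fully non-adjacent pair of orbits -/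
def NoneP (u v : V) : Prop := ∀ d : ZMod 3, ¬ G.Adj u ((Φ φ d) v)

/-- characterization of a constrained pair: adjacency iff difference `= s` (xor `c`) -/
def CC (u v : V) (c : Bool) (s : ZMod 3) : Prop :=
  ∀ d : ZMod 3, G.Adj u ((Φ φ d) v) ↔ ((d = s) ↔ c = false)

def Constrained (u v : V) : Prop := ¬ R φ u v ∧ ¬ FullP φ u v ∧ ¬ NoneP φ u v

open Classical in
noncomputable def pcs (u v : V) : Bool × ZMod 3 :=
  if h : ∃ p : Bool × ZMod 3, CC φ u v p.1 p.2 then h.choose else (false, 0)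

end pairsdef

section pairs
variable {φ : G ≃g G} (hφ3 : φ ^ 3 = 1)

theorem CC_unique {u v : V} {c c' : Bool} {s s' : ZMod 3}
    (h : CC φ u v c s) (h' : CC φ u v c' s') : c = c' ∧ s = s' := by
  have key : ∀ d : ZMod 3, ((d = s) ↔ c = false) ↔ ((d = s') ↔ c' = false) :=
    fun d => (h d).symm.trans (h' d)
  clear h h'
  revert key
  revert c c' s s'
  decide

theorem existsCC {u v : V} (hf : ¬ FullP φ u v) (hn : ¬ NoneP φ u v) :
    ∃ p : Bool × ZMod 3, CC φ u v p.1 p.2 := by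
  by_cases h0 : G.Adj u ((Φ φ 0) v) <;> by_cases h1 : G.Adj u ((Φ φ 1) v) <;>
    by_cases h2 : G.Adj u ((Φ φ 2) v)
  · exact absurd (fun d => by rcases zmod3_cases d with rfl | rfl | rfl <;> assumption) hf
  · exact ⟨(true, 2), fun d => by rcases zmod3_cases d with rfl | rfl | rfl <;>
      simp [h0, h1, h2] <;> decide⟩
  · exact ⟨(true, 1), fun d => by rcases zmod3_cases d with rfl | rfl | rfl <;>
      simp [h0, h1, h2] <;> decide⟩
  · exact ⟨(false, 0), fun d => by rcases zmod3_cases d with rfl | rfl | rfl <;>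
      simp [h0, h1, h2] <;> decide⟩
  · exact ⟨(true, 0), fun d => by rcases zmod3_cases d with rfl | rfl | rfl <;>
      simp [h0, h1, h2] <;> decide⟩
  · exact ⟨(false, 1), fun d => by rcases zmod3_cases d with rfl | rfl | rfl <;>
      simp [h0, h1, h2] <;> decide⟩
  · exact ⟨(false, 2), fun d => by rcases zmod3_cases d with rfl | rfl | rfl <;>
      simp [h0, h1, h2] <;> decide⟩
  · exact absurd (fun d => by rcases zmod3_cases d with rfl | rfl | rfl <;> assumption) hn

theorem pcs_spec {u v : V} (h : Constrained φ u v) :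
    CC φ u v (pcs φ u v).1 (pcs φ u v).2 := by
  obtain ⟨_, hf, hn⟩ := h
  have hex := existsCC hf hn
  classical
  simp only [pcs, dif_pos hex]
  exact hex.choose_spec

theorem pcs_unique {u v : V} {c : Bool} {s : ZMod 3} (h : CC φ u v c s) :
    pcs φ u v = (c, s) := by
  have hex : ∃ p : Bool × ZMod 3, CC φ u v p.1 p.2 := ⟨(c, s), h⟩
  classical
  simp only [pcs, dif_pos hex]
  obtain ⟨hc, hs⟩ := CC_unique hex.choose_spec h
  exact Prod.ext hc hs

include hφ3

theorem CC_shift {u v : V} {c : Bool} {s : ZMod 3} (h : CC φ u v c s) (a b : ZMod 3) :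
    CC φ ((Φ φ a) u) ((Φ φ b) v) c (s + a - b) := by
  intro d
  have e1 : (Φ φ d) ((Φ φ b) v) = (Φ φ (d + b)) v := (Φ_apply_add φ hφ3 d b v).symm
  rw [e1, adj_shift φ hφ3, h (d + b - a)]
  constructor
  · intro hh; constructor
    · intro hd; apply hh.mp; linear_combination hd
    · intro hc; have := hh.mpr hc; linear_combination this
  · intro hh; constructor
    · intro hd; apply hh.mp; linear_combination hd
    · intro hc; have := hh.mpr hc; linear_combination this

theorem CC_symm {u v : V} {c : Bool} {s : ZMod 3} (h : CC φ u v c s) : CC φ v u c (-s) := by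
  intro d
  have e1 : G.Adj v ((Φ φ d) u) ↔ G.Adj ((Φ φ d) u) ((Φ φ 0) v) := by
    rw [Φ_zero_apply]; exact G.adj_comm _ _
  rw [e1, adj_shift φ hφ3, h (0 - d)]
  constructor
  · intro hh; constructor
    · intro hd; apply hh.mp; linear_combination -hd
    · intro hc; have := hh.mpr hc; linear_combination -this
  · intro hh; constructor
    · intro hd; apply hh.mp; linear_combination -hd
    · intro hc; have := hh.mpr hc; linear_combination -this

theorem FullP_shift {u v : V} (h : FullP φ u v) (a b : ZMod 3) :
    FullP φ ((Φ φ a) u) ((Φ φ b) v) := by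
  intro d
  have e1 : (Φ φ d) ((Φ φ b) v) = (Φ φ (d + b)) v := (Φ_apply_add φ hφ3 d b v).symm
  rw [e1, adj_shift φ hφ3]
  exact h _

theorem NoneP_shift {u v : V} (h : NoneP φ u v) (a b : ZMod 3) :
    NoneP φ ((Φ φ a) u) ((Φ φ b) v) := by
  intro d
  have e1 : (Φ φ d) ((Φ φ b) v) = (Φ φ (d + b)) v := (Φ_apply_add φ hφ3 d b v).symm
  rw [e1, adj_shift φ hφ3]
  exact h _

theorem FullP_symm {u v : V} (h : FullP φ u v) : FullP φ v u := by
  intro d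
  have e1 : G.Adj v ((Φ φ d) u) ↔ G.Adj ((Φ φ d) u) ((Φ φ 0) v) := by
    rw [Φ_zero_apply]; exact G.adj_comm _ _
  rw [e1, adj_shift φ hφ3]
  exact h _

theorem NoneP_symm {u v : V} (h : NoneP φ u v) : NoneP φ v u := by
  intro d
  have e1 : G.Adj v ((Φ φ d) u) ↔ G.Adj ((Φ φ d) u) ((Φ φ 0) v) := by
    rw [Φ_zero_apply]; exact G.adj_comm _ _
  rw [e1, adj_shift φ hφ3]
  intro hh
  exact h _ hh

/-- invariance of everything under moving within orbits -/
theorem FullP_invar {u v u' v' : V} (hu : R φ u u') (hv : R φ v v') :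
    FullP φ u v ↔ FullP φ u' v' := by
  obtain ⟨a, rfl⟩ := hu; obtain ⟨b, rfl⟩ := hv
  constructor
  · intro h; exact FullP_shift hφ3 h a b
  · intro h
    have h2 := FullP_shift hφ3 h (-a) (-b)
    have ea : (Φ φ (-a)) ((Φ φ a) u) = u := by
      rw [← Φ_apply_add φ hφ3, neg_add_cancel, Φ_zero_apply]
    have eb : (Φ φ (-b)) ((Φ φ b) v) = v := by
      rw [← Φ_apply_add φ hφ3, neg_add_cancel, Φ_zero_apply]
    rwa [ea, eb] at h2

theorem NoneP_invar {u v u' v' : V} (hu : R φ u u') (hv : R φ v v') :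
    NoneP φ u v ↔ NoneP φ u' v' := by
  obtain ⟨a, rfl⟩ := hu; obtain ⟨b, rfl⟩ := hv
  constructor
  · intro h; exact NoneP_shift hφ3 h a b
  · intro h
    have h2 := NoneP_shift hφ3 h (-a) (-b)
    have ea : (Φ φ (-a)) ((Φ φ a) u) = u := by
      rw [← Φ_apply_add φ hφ3, neg_add_cancel, Φ_zero_apply]
    have eb : (Φ φ (-b)) ((Φ φ b) v) = v := by
      rw [← Φ_apply_add φ hφ3, neg_add_cancel, Φ_zero_apply]
    rwa [ea, eb] at h2

theorem R_invar {u v u' v' : V} (hu : R φ u u') (hv : R φ v v') :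
    R φ u v ↔ R φ u' v' := by
  constructor
  · intro h; exact R_trans hφ3 (R_trans hφ3 (R_symm hφ3 hu) h) hv
  · intro h; exact R_trans hφ3 (R_trans hφ3 hu h) (R_symm hφ3 hv)

theorem Constrained_invar {u v u' v' : V} (hu : R φ u u') (hv : R φ v v') :
    Constrained φ u v ↔ Constrained φ u' v' := by
  unfold Constrained
  rw [R_invar hφ3 hu hv, FullP_invar hφ3 hu hv, NoneP_invar hφ3 hu hv]

theorem Constrained_symm {u v : V} (h : Constrained φ u v) : Constrained φ v u := by
  obtain ⟨hr, hf, hn⟩ := h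
  exact ⟨fun hh => hr (R_symm hφ3 hh), fun hh => hf (FullP_symm hφ3 hh),
    fun hh => hn (NoneP_symm hφ3 hh)⟩

theorem pcs_symm {u v : V} (h : Constrained φ u v) :
    pcs φ v u = ((pcs φ u v).1, -(pcs φ u v).2) :=
  pcs_unique (CC_symm hφ3 (pcs_spec h))

/-- a vertex of a constrained pair is moved by φ -/
theorem constrained_moved_left {u v : V} (h : Constrained φ u v) : φ u ≠ u := by
  obtain ⟨hr, hf, hn⟩ := h
  intro hfix
  have key : ∀ d : ZMod 3, G.Adj u ((Φ φ d) v) ↔ G.Adj u ((Φ φ (d+1)) v) := by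
    intro d
    have e1 : G.Adj u ((Φ φ d) v) ↔ G.Adj (φ u) (φ ((Φ φ d) v)) := φ.map_adj_iff.symm
    have e2 : φ ((Φ φ d) v) = (Φ φ (1 + d)) v := by
      rw [Φ_apply_add φ hφ3, Φ_one_apply]
    rw [e1, e2, hfix, add_comm]
  have k0 := key 0
  rw [show (0+1 : ZMod 3) = 1 from by decide] at k0
  have k1 := key 1
  rw [show (1+1 : ZMod 3) = 2 from by decide] at k1
  by_cases h0 : G.Adj u ((Φ φ 0) v)
  · apply hf
    intro d
    rcases zmod3_cases d with rfl | rfl | rfl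
    · exact h0
    · exact k0.mp h0
    · exact k1.mp (k0.mp h0)
  · apply hn
    intro d
    rcases zmod3_cases d with rfl | rfl | rfl
    · exact h0
    · exact fun hh => h0 (k0.mpr hh)
    · exact fun hh => h0 (k0.mpr (k1.mpr hh))

theorem constrained_moved_right {u v : V} (h : Constrained φ u v) : φ v ≠ v :=
  constrained_moved_left hφ3 (Constrained_symm hφ3 h)

end pairs

def mAdjT (t0 c1 c2 c3 : Bool) (σ : ZMod 3) (p q : Fin 3 × ZMod 3) : Bool :=
  match p.1.val, q.1.val with
  | 0, 0 => decide (p.2 ≠ q.2) && t0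
  | 0, 1 => xor (decide (q.2 - p.2 = 0)) c1
  | 1, 0 => xor (decide (p.2 - q.2 = 0)) c1
  | 1, 2 => xor (decide (q.2 - p.2 = 0)) c2
  | 2, 1 => xor (decide (p.2 - q.2 = 0)) c2
  | 0, 2 => xor (decide (q.2 - p.2 = σ)) c3
  | 2, 0 => xor (decide (p.2 - q.2 = σ)) c3
  | _, _ => false

def aFun (a0 a1 a2 : Bool) (d : ZMod 3) : Bool :=
  if d = 0 then a0 else if d = 1 then a1 else a2

def mAdj4 (c01 c12 c23 f02 f13 a0 a1 a2 : Bool) (p q : Fin 4 × ZMod 3) : Bool :=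
  match p.1.val, q.1.val with
  | 0, 1 => xor (decide (q.2 - p.2 = 0)) c01
  | 1, 0 => xor (decide (p.2 - q.2 = 0)) c01
  | 1, 2 => xor (decide (q.2 - p.2 = 0)) c12
  | 2, 1 => xor (decide (p.2 - q.2 = 0)) c12
  | 2, 3 => xor (decide (q.2 - p.2 = 0)) c23
  | 3, 2 => xor (decide (p.2 - q.2 = 0)) c23
  | 0, 2 => f02
  | 2, 0 => f02
  | 1, 3 => f13
  | 3, 1 => f13
  | 0, 3 => aFun a0 a1 a2 (q.2 - p.2)
  | 3, 0 => aFun a0 a1 a2 (p.2 - q.2)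
  | _, _ => false

abbrev IsP4 {α : Type*} (A : α → α → Bool) (w : Fin 4 → α) : Prop :=
  A (w 0) (w 1) = true ∧ A (w 1) (w 2) = true ∧ A (w 2) (w 3) = true ∧
  A (w 0) (w 2) = false ∧ A (w 0) (w 3) = false ∧ A (w 1) (w 3) = false

def witT (t0 c1 c2 c3 : Bool) (σ : ZMod 3) : Fin 4 → Fin 3 × ZMod 3 :=
  match t0, c1, c2, c3, σ.val with
  | false, false, false, false, 1 => ![(0, 0), (1, 0), (2, 0), (0, 2)]
  | false, false, false, false, 2 => ![(0, 0), (1, 0), (2, 0), (0, 1)]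
  | false, false, false, true, 1 => ![(0, 0), (2, 0), (0, 1), (1, 1)]
  | false, false, false, true, 2 => ![(0, 0), (2, 0), (0, 2), (1, 2)]
  | false, false, true, false, 1 => ![(0, 0), (1, 0), (2, 2), (0, 1)]
  | false, false, true, false, 2 => ![(0, 0), (1, 0), (2, 1), (0, 2)]
  | false, false, true, true, 1 => ![(0, 0), (1, 0), (2, 1), (0, 1)]
  | false, false, true, true, 2 => ![(0, 0), (1, 0), (2, 2), (0, 1)]
  | false, true, false, false, 1 => ![(0, 0), (1, 1), (0, 2), (2, 0)]
  | false, true, false, false, 2 => ![(0, 0), (1, 2), (0, 1), (2, 0)]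
  | false, true, false, true, 1 => ![(0, 0), (1, 1), (2, 1), (0, 1)]
  | false, true, false, true, 2 => ![(0, 0), (1, 1), (0, 2), (2, 2)]
  | false, true, true, false, 1 => ![(0, 0), (1, 1), (2, 2), (0, 1)]
  | false, true, true, false, 2 => ![(0, 0), (1, 1), (0, 2), (2, 1)]
  | false, true, true, true, 1 => ![(0, 0), (1, 1), (0, 2), (2, 1)]
  | false, true, true, true, 2 => ![(0, 0), (1, 1), (2, 2), (0, 1)]
  | true, false, false, false, 1 => ![(0, 0), (0, 1), (2, 2), (1, 2)]
  | true, false, false, false, 2 => ![(0, 0), (0, 1), (1, 1), (2, 1)]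
  | true, false, false, true, 1 => ![(0, 0), (0, 2), (2, 1), (1, 1)]
  | true, false, false, true, 2 => ![(0, 0), (0, 1), (2, 2), (1, 2)]
  | true, false, true, false, 1 => ![(0, 0), (0, 1), (1, 1), (2, 0)]
  | true, false, true, false, 2 => ![(0, 0), (0, 1), (2, 0), (1, 2)]
  | true, false, true, true, 1 => ![(0, 0), (0, 1), (2, 1), (1, 2)]
  | true, false, true, true, 2 => ![(0, 0), (0, 2), (2, 2), (1, 1)]
  | true, true, false, false, 1 => ![(0, 0), (0, 1), (1, 0), (2, 0)]
  | true, true, false, false, 2 => ![(0, 0), (0, 2), (1, 0), (2, 0)]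
  | true, true, false, true, 1 => ![(1, 0), (0, 1), (0, 0), (2, 2)]
  | true, true, false, true, 2 => ![(1, 0), (0, 2), (0, 0), (2, 1)]
  | true, true, true, false, 1 => ![(0, 0), (0, 2), (1, 0), (2, 2)]
  | true, true, true, false, 2 => ![(0, 0), (0, 1), (1, 0), (2, 1)]
  | true, true, true, true, 1 => ![(1, 0), (0, 2), (0, 0), (2, 0)]
  | true, true, true, true, 2 => ![(1, 0), (0, 1), (0, 0), (2, 0)]
  | _, _, _, _, _ => ![(0, 0), (0, 1), (0, 2), (1, 0)]

def wit4 (c01 c12 c23 f02 f13 a0 a1 a2 : Bool) : Fin 4 → Fin 4 × ZMod 3 :=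
  match c01, c12, c23, f02, f13, a0, a1, a2 with
  | false, false, false, false, false, false, false, false => ![(0, 0), (1, 0), (2, 0), (3, 0)]
  | false, false, false, false, false, false, false, true => ![(0, 0), (1, 0), (2, 0), (3, 0)]
  | false, false, false, false, false, false, true, false => ![(0, 0), (1, 0), (2, 0), (3, 0)]
  | false, false, false, false, false, true, false, true => ![(0, 0), (3, 2), (2, 2), (1, 2)]
  | false, false, false, false, false, true, true, false => ![(0, 0), (3, 1), (2, 1), (1, 1)]
  | false, false, false, false, false, true, true, true => ![(0, 0), (3, 1), (2, 1), (1, 1)]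
  | false, false, false, false, true, false, false, false => ![(0, 0), (1, 0), (3, 1), (2, 1)]
  | false, false, false, false, true, false, false, true => ![(0, 0), (1, 0), (3, 1), (2, 1)]
  | false, false, false, false, true, false, true, false => ![(0, 0), (1, 0), (3, 2), (2, 2)]
  | false, false, false, false, true, true, false, true => ![(0, 0), (1, 0), (3, 1), (2, 1)]
  | false, false, false, false, true, true, true, false => ![(0, 0), (1, 0), (3, 2), (2, 2)]
  | false, false, false, false, true, true, true, true => ![(0, 0), (3, 0), (1, 1), (2, 1)]
  | false, false, false, true, false, false, false, false => ![(1, 0), (0, 0), (2, 1), (3, 1)]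
  | false, false, false, true, false, false, false, true => ![(1, 0), (0, 0), (2, 1), (3, 1)]
  | false, false, false, true, false, false, true, false => ![(1, 0), (0, 0), (2, 2), (3, 2)]
  | false, false, false, true, false, true, false, true => ![(1, 0), (0, 0), (2, 1), (3, 1)]
  | false, false, false, true, false, true, true, false => ![(1, 0), (0, 0), (2, 2), (3, 2)]
  | false, false, false, true, false, true, true, true => ![(1, 0), (2, 0), (0, 1), (3, 1)]
  | false, false, false, true, true, false, false, false => ![(0, 0), (2, 0), (3, 0), (1, 1)]
  | false, false, false, true, true, false, false, true => ![(0, 0), (2, 0), (3, 0), (1, 1)]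
  | false, false, false, true, true, false, true, false => ![(0, 0), (2, 0), (3, 0), (1, 1)]
  | false, false, false, true, true, true, false, true => ![(0, 0), (2, 1), (3, 1), (1, 2)]
  | false, false, false, true, true, true, true, false => ![(0, 0), (2, 1), (1, 1), (3, 2)]
  | false, false, false, true, true, true, true, true => ![(1, 0), (3, 0), (0, 1), (2, 1)]
  | false, false, true, false, false, false, false, false => ![(0, 0), (1, 0), (2, 0), (3, 1)]
  | false, false, true, false, false, false, false, true => ![(0, 0), (1, 0), (2, 0), (3, 1)]
  | false, false, true, false, false, false, true, false => ![(0, 0), (1, 0), (2, 0), (3, 2)]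
  | false, false, true, false, false, true, false, true => ![(0, 0), (1, 0), (2, 0), (3, 1)]
  | false, false, true, false, false, true, true, false => ![(0, 0), (1, 0), (2, 0), (3, 2)]
  | false, false, true, false, false, true, true, true => ![(0, 0), (3, 0), (2, 1), (1, 1)]
  | false, false, true, false, true, false, false, false => ![(0, 0), (1, 0), (3, 0), (2, 1)]
  | false, false, true, false, true, false, false, true => ![(0, 0), (1, 0), (3, 0), (2, 1)]
  | false, false, true, false, true, false, true, false => ![(0, 0), (1, 0), (3, 0), (2, 1)]
  | false, false, true, false, true, true, false, true => ![(0, 0), (1, 0), (3, 1), (2, 2)]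
  | false, false, true, false, true, true, true, false => ![(0, 0), (1, 0), (3, 2), (2, 1)]
  | false, false, true, false, true, true, true, true => ![(0, 0), (3, 1), (1, 1), (2, 1)]
  | false, false, true, true, false, false, false, false => ![(1, 0), (0, 0), (2, 1), (3, 0)]
  | false, false, true, true, false, false, false, true => ![(1, 0), (0, 0), (2, 1), (3, 0)]
  | false, false, true, true, false, false, true, false => ![(1, 0), (0, 0), (2, 1), (3, 0)]
  | false, false, true, true, false, true, false, true => ![(1, 0), (0, 0), (2, 2), (3, 1)]
  | false, false, true, true, false, true, true, false => ![(1, 0), (0, 0), (2, 1), (3, 2)]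
  | false, false, true, true, false, true, true, true => ![(1, 0), (2, 0), (0, 1), (3, 0)]
  | false, false, true, true, true, false, false, false => ![(0, 0), (2, 0), (3, 1), (1, 1)]
  | false, false, true, true, true, false, false, true => ![(0, 0), (2, 0), (3, 1), (1, 1)]
  | false, false, true, true, true, false, true, false => ![(0, 0), (2, 0), (3, 2), (1, 1)]
  | false, false, true, true, true, true, false, true => ![(0, 0), (2, 0), (3, 1), (1, 1)]
  | false, false, true, true, true, true, true, false => ![(0, 0), (2, 0), (3, 2), (1, 1)]
  | false, false, true, true, true, true, true, true => ![(1, 0), (3, 1), (0, 1), (2, 1)]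
  | false, true, false, false, false, false, false, false => ![(0, 0), (1, 0), (2, 1), (3, 1)]
  | false, true, false, false, false, false, false, true => ![(0, 0), (1, 0), (2, 1), (3, 1)]
  | false, true, false, false, false, false, true, false => ![(0, 0), (1, 0), (2, 2), (3, 2)]
  | false, true, false, false, false, true, false, true => ![(0, 0), (1, 0), (2, 1), (3, 1)]
  | false, true, false, false, false, true, true, false => ![(0, 0), (1, 0), (2, 2), (3, 2)]
  | false, true, false, false, false, true, true, true => ![(0, 0), (3, 0), (2, 0), (1, 1)]
  | false, true, false, false, true, false, false, false => ![(0, 0), (1, 0), (3, 0), (2, 0)]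
  | false, true, false, false, true, false, false, true => ![(0, 0), (1, 0), (3, 0), (2, 0)]
  | false, true, false, false, true, false, true, false => ![(0, 0), (1, 0), (3, 0), (2, 0)]
  | false, true, false, false, true, true, false, true => ![(0, 0), (3, 0), (1, 1), (2, 2)]
  | false, true, false, false, true, true, true, false => ![(0, 0), (3, 0), (1, 1), (2, 2)]
  | false, true, false, false, true, true, true, true => ![(0, 0), (3, 0), (1, 1), (2, 2)]
  | false, true, false, true, false, false, false, false => ![(1, 0), (0, 0), (2, 0), (3, 0)]
  | false, true, false, true, false, false, false, true => ![(1, 0), (0, 0), (2, 0), (3, 0)]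
  | false, true, false, true, false, false, true, false => ![(1, 0), (0, 0), (2, 0), (3, 0)]
  | false, true, false, true, false, true, false, true => ![(1, 0), (2, 1), (0, 1), (3, 0)]
  | false, true, false, true, false, true, true, false => ![(1, 0), (2, 1), (0, 1), (3, 2)]
  | false, true, false, true, false, true, true, true => ![(1, 0), (2, 1), (0, 1), (3, 0)]
  | false, true, false, true, true, false, false, false => ![(0, 0), (2, 0), (1, 1), (3, 1)]
  | false, true, false, true, true, false, false, true => ![(0, 0), (2, 0), (1, 1), (3, 1)]
  | false, true, false, true, true, false, true, false => ![(0, 0), (2, 0), (1, 1), (3, 2)]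
  | false, true, false, true, true, true, false, true => ![(0, 0), (2, 0), (1, 1), (3, 1)]
  | false, true, false, true, true, true, true, false => ![(0, 0), (2, 0), (1, 1), (3, 2)]
  | false, true, false, true, true, true, true, true => ![(1, 0), (3, 1), (0, 1), (2, 0)]
  | false, true, true, false, false, false, false, false => ![(0, 0), (1, 0), (2, 1), (3, 0)]
  | false, true, true, false, false, false, false, true => ![(0, 0), (1, 0), (2, 1), (3, 0)]
  | false, true, true, false, false, false, true, false => ![(0, 0), (1, 0), (2, 1), (3, 0)]
  | false, true, true, false, false, true, false, true => ![(0, 0), (1, 0), (2, 2), (3, 1)]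
  | false, true, true, false, false, true, true, false => ![(0, 0), (1, 0), (2, 1), (3, 2)]
  | false, true, true, false, false, true, true, true => ![(0, 0), (3, 0), (2, 1), (1, 2)]
  | false, true, true, false, true, false, false, false => ![(0, 0), (1, 0), (3, 1), (2, 0)]
  | false, true, true, false, true, false, false, true => ![(0, 0), (1, 0), (3, 1), (2, 0)]
  | false, true, true, false, true, false, true, false => ![(0, 0), (1, 0), (3, 2), (2, 0)]
  | false, true, true, false, true, true, false, true => ![(0, 0), (1, 0), (3, 1), (2, 0)]
  | false, true, true, false, true, true, true, false => ![(0, 0), (1, 0), (3, 2), (2, 0)]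
  | false, true, true, false, true, true, true, true => ![(0, 0), (3, 0), (1, 1), (2, 0)]
  | false, true, true, true, false, false, false, false => ![(1, 0), (0, 0), (2, 0), (3, 1)]
  | false, true, true, true, false, false, false, true => ![(1, 0), (0, 0), (2, 0), (3, 1)]
  | false, true, true, true, false, false, true, false => ![(1, 0), (0, 0), (2, 0), (3, 2)]
  | false, true, true, true, false, true, false, true => ![(1, 0), (0, 0), (2, 0), (3, 1)]
  | false, true, true, true, false, true, true, false => ![(1, 0), (0, 0), (2, 0), (3, 2)]
  | false, true, true, true, false, true, true, true => ![(1, 0), (2, 1), (0, 1), (3, 1)]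
  | false, true, true, true, true, false, false, false => ![(0, 0), (2, 0), (1, 1), (3, 0)]
  | false, true, true, true, true, false, false, true => ![(0, 0), (2, 0), (1, 1), (3, 0)]
  | false, true, true, true, true, false, true, false => ![(0, 0), (2, 0), (1, 1), (3, 0)]
  | false, true, true, true, true, true, false, true => ![(0, 0), (2, 1), (1, 2), (3, 1)]
  | false, true, true, true, true, true, true, false => ![(0, 0), (2, 1), (3, 2), (1, 1)]
  | false, true, true, true, true, true, true, true => ![(1, 0), (3, 0), (0, 1), (2, 0)]
  | true, false, false, false, false, false, false, false => ![(0, 0), (1, 1), (2, 1), (3, 1)]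
  | true, false, false, false, false, false, false, true => ![(0, 0), (1, 1), (2, 1), (3, 1)]
  | true, false, false, false, false, false, true, false => ![(0, 0), (1, 2), (2, 2), (3, 2)]
  | true, false, false, false, false, true, false, true => ![(0, 0), (1, 1), (2, 1), (3, 1)]
  | true, false, false, false, false, true, true, false => ![(0, 0), (1, 2), (2, 2), (3, 2)]
  | true, false, false, false, false, true, true, true => ![(0, 0), (3, 0), (2, 0), (1, 0)]
  | true, false, false, false, true, false, false, false => ![(0, 0), (1, 1), (3, 0), (2, 0)]
  | true, false, false, false, true, false, false, true => ![(0, 0), (1, 1), (3, 0), (2, 0)]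
  | true, false, false, false, true, false, true, false => ![(0, 0), (1, 1), (3, 0), (2, 0)]
  | true, false, false, false, true, true, false, true => ![(0, 0), (1, 2), (3, 1), (2, 1)]
  | true, false, false, false, true, true, true, false => ![(0, 0), (1, 1), (3, 2), (2, 2)]
  | true, false, false, false, true, true, true, true => ![(0, 0), (3, 1), (1, 0), (2, 0)]
  | true, false, false, true, false, false, false, false => ![(1, 0), (0, 1), (2, 1), (3, 1)]
  | true, false, false, true, false, false, false, true => ![(1, 0), (0, 1), (2, 1), (3, 1)]
  | true, false, false, true, false, false, true, false => ![(1, 0), (0, 1), (2, 1), (3, 1)]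
  | true, false, false, true, false, true, false, true => ![(1, 0), (0, 1), (2, 2), (3, 2)]
  | true, false, false, true, false, true, true, false => ![(1, 0), (0, 2), (2, 1), (3, 1)]
  | true, false, false, true, false, true, true, true => ![(1, 0), (2, 0), (0, 0), (3, 1)]
  | true, false, false, true, true, false, false, false => ![(0, 0), (2, 0), (1, 0), (3, 1)]
  | true, false, false, true, true, false, false, true => ![(0, 0), (2, 0), (1, 0), (3, 1)]
  | true, false, false, true, true, false, true, false => ![(0, 0), (2, 0), (1, 0), (3, 2)]
  | true, false, false, true, true, true, false, true => ![(0, 0), (2, 0), (1, 0), (3, 1)]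
  | true, false, false, true, true, true, true, false => ![(0, 0), (2, 0), (1, 0), (3, 2)]
  | true, false, false, true, true, true, true, true => ![(1, 0), (3, 0), (0, 0), (2, 1)]
  | true, false, true, false, false, false, false, false => ![(0, 0), (1, 1), (2, 1), (3, 0)]
  | true, false, true, false, false, false, false, true => ![(0, 0), (1, 1), (2, 1), (3, 0)]
  | true, false, true, false, false, false, true, false => ![(0, 0), (1, 1), (2, 1), (3, 0)]
  | true, false, true, false, false, true, false, true => ![(0, 0), (1, 2), (2, 2), (3, 1)]
  | true, false, true, false, false, true, true, false => ![(0, 0), (1, 1), (2, 1), (3, 2)]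
  | true, false, true, false, false, true, true, true => ![(0, 0), (3, 1), (2, 0), (1, 0)]
  | true, false, true, false, true, false, false, false => ![(0, 0), (1, 1), (3, 0), (2, 2)]
  | true, false, true, false, true, false, false, true => ![(0, 0), (1, 1), (3, 0), (2, 2)]
  | true, false, true, false, true, false, true, false => ![(0, 0), (1, 1), (3, 0), (2, 2)]
  | true, false, true, false, true, true, false, true => ![(0, 0), (1, 1), (3, 1), (2, 0)]
  | true, false, true, false, true, true, true, false => ![(0, 0), (1, 1), (3, 2), (2, 0)]
  | true, false, true, false, true, true, true, true => ![(0, 0), (3, 0), (1, 0), (2, 0)]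
  | true, false, true, true, false, false, false, false => ![(1, 0), (0, 1), (2, 1), (3, 0)]
  | true, false, true, true, false, false, false, true => ![(1, 0), (0, 1), (2, 1), (3, 2)]
  | true, false, true, true, false, false, true, false => ![(1, 0), (0, 1), (2, 1), (3, 0)]
  | true, false, true, true, false, true, false, true => ![(1, 0), (0, 1), (2, 1), (3, 2)]
  | true, false, true, true, false, true, true, false => ![(1, 0), (0, 1), (2, 1), (3, 0)]
  | true, false, true, true, false, true, true, true => ![(1, 0), (2, 0), (0, 0), (3, 0)]
  | true, false, true, true, true, false, false, false => ![(0, 0), (2, 0), (1, 0), (3, 0)]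
  | true, false, true, true, true, false, false, true => ![(0, 0), (2, 0), (1, 0), (3, 0)]
  | true, false, true, true, true, false, true, false => ![(0, 0), (2, 0), (1, 0), (3, 0)]
  | true, false, true, true, true, true, false, true => ![(0, 0), (2, 2), (3, 1), (1, 0)]
  | true, false, true, true, true, true, true, false => ![(0, 0), (2, 1), (3, 2), (1, 0)]
  | true, false, true, true, true, true, true, true => ![(1, 0), (3, 1), (0, 0), (2, 1)]
  | true, true, false, false, false, false, false, false => ![(0, 0), (1, 1), (2, 0), (3, 0)]
  | true, true, false, false, false, false, false, true => ![(0, 0), (1, 1), (2, 0), (3, 0)]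
  | true, true, false, false, false, false, true, false => ![(0, 0), (1, 1), (2, 0), (3, 0)]
  | true, true, false, false, false, true, false, true => ![(0, 0), (1, 2), (2, 1), (3, 1)]
  | true, true, false, false, false, true, true, false => ![(0, 0), (1, 1), (2, 2), (3, 2)]
  | true, true, false, false, false, true, true, true => ![(0, 0), (3, 1), (2, 1), (1, 0)]
  | true, true, false, false, true, false, false, false => ![(0, 0), (1, 1), (3, 1), (2, 1)]
  | true, true, false, false, true, false, false, true => ![(0, 0), (1, 1), (3, 1), (2, 1)]
  | true, true, false, false, true, false, true, false => ![(0, 0), (1, 2), (3, 2), (2, 2)]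
  | true, true, false, false, true, true, false, true => ![(0, 0), (1, 1), (3, 1), (2, 1)]
  | true, true, false, false, true, true, true, false => ![(0, 0), (1, 2), (3, 2), (2, 2)]
  | true, true, false, false, true, true, true, true => ![(0, 0), (3, 0), (1, 0), (2, 1)]
  | true, true, false, true, false, false, false, false => ![(1, 0), (0, 1), (2, 0), (3, 0)]
  | true, true, false, true, false, false, false, true => ![(1, 0), (0, 2), (2, 0), (3, 0)]
  | true, true, false, true, false, false, true, false => ![(1, 0), (0, 1), (2, 0), (3, 0)]
  | true, true, false, true, false, true, false, true => ![(1, 0), (0, 2), (2, 0), (3, 0)]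
  | true, true, false, true, false, true, true, false => ![(1, 0), (0, 1), (2, 0), (3, 0)]
  | true, true, false, true, false, true, true, true => ![(1, 0), (2, 1), (0, 0), (3, 0)]
  | true, true, false, true, true, false, false, false => ![(0, 0), (2, 0), (3, 0), (1, 0)]
  | true, true, false, true, true, false, false, true => ![(0, 0), (2, 0), (3, 0), (1, 0)]
  | true, true, false, true, true, false, true, false => ![(0, 0), (2, 0), (3, 0), (1, 0)]
  | true, true, false, true, true, true, false, true => ![(0, 0), (2, 2), (1, 0), (3, 1)]
  | true, true, false, true, true, true, true, false => ![(0, 0), (2, 1), (1, 0), (3, 2)]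
  | true, true, false, true, true, true, true, true => ![(1, 0), (3, 1), (0, 0), (2, 0)]
  | true, true, true, false, false, false, false, false => ![(0, 0), (1, 1), (2, 0), (3, 1)]
  | true, true, true, false, false, false, false, true => ![(0, 0), (1, 1), (2, 0), (3, 1)]
  | true, true, true, false, false, false, true, false => ![(0, 0), (1, 1), (2, 0), (3, 2)]
  | true, true, true, false, false, true, false, true => ![(0, 0), (1, 1), (2, 0), (3, 1)]
  | true, true, true, false, false, true, true, false => ![(0, 0), (1, 1), (2, 0), (3, 2)]
  | true, true, true, false, false, true, true, true => ![(0, 0), (3, 0), (2, 1), (1, 0)]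
  | true, true, true, false, true, false, false, false => ![(0, 0), (1, 1), (3, 0), (2, 1)]
  | true, true, true, false, true, false, false, true => ![(0, 0), (1, 1), (3, 0), (2, 1)]
  | true, true, true, false, true, false, true, false => ![(0, 0), (1, 1), (3, 0), (2, 1)]
  | true, true, true, false, true, true, false, true => ![(0, 0), (1, 2), (3, 1), (2, 2)]
  | true, true, true, false, true, true, true, false => ![(0, 0), (1, 1), (3, 2), (2, 1)]
  | true, true, true, false, true, true, true, true => ![(0, 0), (3, 1), (1, 0), (2, 1)]
  | true, true, true, true, false, false, false, false => ![(1, 0), (0, 1), (2, 0), (3, 1)]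
  | true, true, true, true, false, false, false, true => ![(1, 0), (0, 1), (2, 0), (3, 1)]
  | true, true, true, true, false, false, true, false => ![(1, 0), (0, 1), (2, 0), (3, 1)]
  | true, true, true, true, false, true, false, true => ![(1, 0), (0, 1), (2, 0), (3, 2)]
  | true, true, true, true, false, true, true, false => ![(1, 0), (0, 2), (2, 0), (3, 1)]
  | true, true, true, true, false, true, true, true => ![(1, 0), (2, 1), (0, 0), (3, 1)]
  | true, true, true, true, true, false, false, false => ![(0, 0), (2, 0), (3, 1), (1, 0)]
  | true, true, true, true, true, false, false, true => ![(0, 0), (2, 0), (3, 1), (1, 0)]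
  | true, true, true, true, true, false, true, false => ![(0, 0), (2, 0), (3, 2), (1, 0)]
  | true, true, true, true, true, true, false, true => ![(0, 0), (2, 0), (3, 1), (1, 0)]
  | true, true, true, true, true, true, true, false => ![(0, 0), (2, 0), (3, 2), (1, 0)]
  | true, true, true, true, true, true, true, true => ![(1, 0), (3, 0), (0, 0), (2, 0)]
  | _, _, _, _, _, _, _, _ => ![(0, 0), (1, 0), (2, 0), (3, 0)]


theorem pureT (t0 c1 c2 c3 : Bool) (σ : ZMod 3) (hσ : σ ≠ 0) :
    ∃ w : Fin 4 → Fin 3 × ZMod 3,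
      (∀ k l : Fin 4, k ≠ l → w k ≠ w l) ∧
      (∀ k l : Fin 4, (w k).1 = (w l).1 → k = l ∨ (w k).1 = 0) ∧
      IsP4 (mAdjT t0 c1 c2 c3 σ) w := by
  refine ⟨witT t0 c1 c2 c3 σ, ?_⟩
  revert hσ
  revert t0 c1 c2 c3 σ
  decide

theorem pure4 (c01 c12 c23 f02 f13 a0 a1 a2 : Bool) (ha : ¬ (a1 = a2 ∧ a0 ≠ a1)) :
    ∃ w : Fin 4 → Fin 4 × ZMod 3,
      (∀ k l : Fin 4, k ≠ l → (w k).1 ≠ (w l).1) ∧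
      IsP4 (mAdj4 c01 c12 c23 f02 f13 a0 a1 a2) w := by
  refine ⟨wit4 c01 c12 c23 f02 f13 a0 a1 a2, ?_⟩
  revert ha
  revert c01 c12 c23 f02 f13 a0 a1 a2
  decide

theorem mkP4 {V : Type*} {G : SimpleGraph V} (f : Fin 4 → V)
    (hinj : ∀ k l : Fin 4, k ≠ l → f k ≠ f l)
    (h01 : G.Adj (f 0) (f 1)) (h12 : G.Adj (f 1) (f 2)) (h23 : G.Adj (f 2) (f 3))
    (n02 : ¬ G.Adj (f 0) (f 2)) (n03 : ¬ G.Adj (f 0) (f 3)) (n13 : ¬ G.Adj (f 1) (f 3)) :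
    Nonempty ((pathGraph 4) ↪g G) := by
  refine ⟨⟨⟨f, fun {a b} hab => by by_contra hne; exact hinj a b hne hab⟩, ?_⟩⟩
  intro a b
  show G.Adj (f a) (f b) ↔ (pathGraph 4).Adj a b
  fin_cases a <;> fin_cases b <;>
    simp only [pathGraph_adj] <;> norm_num <;>
    first
      | exact fun h => G.irrefl h
      | exact h01 | exact h12 | exact h23
      | exact h01.symm | exact h12.symm | exact h23.symm
      | exact n02 | exact n03 | exact n13
      | exact fun h => n02 h.symm
      | exact fun h => n03 h.symm
      | exact fun h => n13 h.symm

theorem xor_decide_eq_true {P : Prop} [Decidable P] {c : Bool} :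
    xor (decide P) c = true ↔ (P ↔ c = false) := by
  cases c <;> simp

theorem xor_decide_eq_false {P : Prop} [Decidable P] {c : Bool} :
    xor (decide P) c = false ↔ ¬ (P ↔ c = false) := by
  cases c <;> simp

section mainlemmas
variable {φ : G ≃g G} (hφ3 : φ ^ 3 = 1)

theorem fin3_cases : ∀ i : Fin 3, i = 0 ∨ i = 1 ∨ i = 2 := by decide

include hφ3

theorem internal_char {u : V} {d : ZMod 3} (hd : d ≠ 0) :
    G.Adj u ((Φ φ d) u) ↔ G.Adj u (φ u) := by
  rcases zmod3_cases d with rfl | rfl | rfl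
  · exact absurd rfl hd
  · rw [Φ_one_apply]
  · have e1 : G.Adj u ((Φ φ 2) u) ↔ G.Adj (φ u) (φ ((Φ φ 2) u)) := φ.map_adj_iff.symm
    have e2 : φ ((Φ φ 2) u) = (Φ φ (1 + 2)) u := by rw [Φ_apply_add φ hφ3, Φ_one_apply]
    rw [e1, e2, show (1 + 2 : ZMod 3) = 0 from by decide, Φ_zero_apply]
    exact G.adj_comm _ _

theorem TRI (hfree : ¬ Nonempty ((pathGraph 4) ↪g G)) {u v w : V}
    (huv : Constrained φ u v) (hvw : Constrained φ v w) (huw : Constrained φ u w) :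
    (pcs φ u w).2 = (pcs φ u v).2 + (pcs φ v w).2 := by
  classical
  by_contra hne
  have cc1 : CC φ u v (pcs φ u v).1 (pcs φ u v).2 := pcs_spec huv
  have cc2 : CC φ v w (pcs φ v w).1 (pcs φ v w).2 := pcs_spec hvw
  have cc3 : CC φ u w (pcs φ u w).1 (pcs φ u w).2 := pcs_spec huw
  set c1 := (pcs φ u v).1
  set s1 := (pcs φ u v).2
  set c2 := (pcs φ v w).1
  set s2 := (pcs φ v w).2
  set c3 := (pcs φ u w).1
  set s3 := (pcs φ u w).2
  set σ : ZMod 3 := s3 - s1 - s2 with hσdef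
  have hσ : σ ≠ 0 := fun h => hne (by rw [hσdef] at h; linear_combination h)
  set t0 : Bool := decide (G.Adj u (φ u)) with ht0
  obtain ⟨wt, hdist, horb, hP4⟩ := pureT t0 c1 c2 c3 σ hσ
  set F : Fin 3 × ZMod 3 → V := fun p =>
    if p.1 = 0 then (Φ φ p.2) u else if p.1 = 1 then (Φ φ (p.2 + s1)) v
    else (Φ φ (p.2 + s1 + s2)) w with hFdef
  have F0 : ∀ x : ZMod 3, F (0, x) = (Φ φ x) u := fun x => rfl
  have F1 : ∀ x : ZMod 3, F (1, x) = (Φ φ (x + s1)) v := fun x => rfl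
  have F2 : ∀ x : ZMod 3, F (2, x) = (Φ φ (x + s1 + s2)) w := fun x => rfl
  have hu3 : φ u ≠ u := constrained_moved_left hφ3 huv
  have nuv : ¬ R φ u v := huv.1
  have nvw : ¬ R φ v w := hvw.1
  have nuw : ¬ R φ u w := huw.1
  have nvu : ¬ R φ v u := fun h => nuv (R_symm hφ3 h)
  have nwv : ¬ R φ w v := fun h => nvw (R_symm hφ3 h)
  have nwu : ¬ R φ w u := fun h => nuw (R_symm hφ3 h)
  -- injectivity of F on admissible pairs
  have hFinj : ∀ p q : Fin 3 × ZMod 3, p ≠ q → (p.1 = q.1 → p.1 = 0) → F p ≠ F q := by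
    rintro ⟨i, x⟩ ⟨j, y⟩ hpq hor
    rcases fin3_cases i with rfl | rfl | rfl <;> rcases fin3_cases j with rfl | rfl | rfl
    · have hxy : x ≠ y := fun h => hpq (by rw [h])
      rw [F0, F0]
      exact fun h => hxy (Φ_inj hφ3 hu3 h)
    · rw [F0, F1]; exact ne_of_not_R hφ3 nuv _ _
    · rw [F0, F2]; exact ne_of_not_R hφ3 nuw _ _
    · rw [F1, F0]; exact ne_of_not_R hφ3 nvu _ _
    · exact absurd (hor rfl) (show ¬ (1 : Fin 3) = 0 from by decide)
    · rw [F1, F2]; exact ne_of_not_R hφ3 nvw _ _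
    · rw [F2, F0]; exact ne_of_not_R hφ3 nwu _ _
    · rw [F2, F1]; exact ne_of_not_R hφ3 nwv _ _
    · exact absurd (hor rfl) (show ¬ (2 : Fin 3) = 0 from by decide)
  -- adjacency characterization
  have hchar : ∀ p q : Fin 3 × ZMod 3, (p.1 = q.1 → p.1 = 0) →
      (G.Adj (F p) (F q) ↔ mAdjT t0 c1 c2 c3 σ p q = true) := by
    rintro ⟨i, x⟩ ⟨j, y⟩ hor
    rcases fin3_cases i with rfl | rfl | rfl <;> rcases fin3_cases j with rfl | rfl | rfl
    · -- (0,0)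
      rw [F0, F0]
      show G.Adj ((Φ φ x) u) ((Φ φ y) u) ↔ (decide (x ≠ y) && t0) = true
      by_cases hxy : x = y
      · subst hxy
        constructor
        · intro h; exact absurd h G.irrefl
        · intro h
          have hR : (decide (x ≠ x) && t0) = false := by simp
          rw [hR] at h; exact Bool.noConfusion h
      · rw [adj_shift φ hφ3, internal_char hφ3 (sub_ne_zero.mpr (Ne.symm hxy))]
        have hR : (decide (x ≠ y) && t0) = t0 := by simp [hxy]
        rw [hR, ht0, decide_eq_true_iff]
    · -- (0,1)
      rw [F0, F1]
      show G.Adj ((Φ φ x) u) ((Φ φ (y + s1)) v) ↔ xor (decide (y - x = 0)) c1 = true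
      rw [adj_shift φ hφ3, cc1 (y + s1 - x), xor_decide_eq_true]
      have ar : (y + s1 - x = s1) ↔ (y - x = 0) := by
        constructor <;> intro h <;> linear_combination h
      rw [ar]
    · -- (0,2)
      rw [F0, F2]
      show G.Adj ((Φ φ x) u) ((Φ φ (y + s1 + s2)) w) ↔ xor (decide (y - x = σ)) c3 = true
      rw [adj_shift φ hφ3, cc3 (y + s1 + s2 - x), xor_decide_eq_true]
      have ar : (y + s1 + s2 - x = s3) ↔ (y - x = σ) := by
        rw [hσdef]; constructor <;> intro h <;> linear_combination h
      rw [ar]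
    · -- (1,0)
      rw [F1, F0]
      show G.Adj ((Φ φ (x + s1)) v) ((Φ φ y) u) ↔ xor (decide (x - y = 0)) c1 = true
      rw [adj_shift φ hφ3, CC_symm hφ3 cc1 (y - (x + s1)), xor_decide_eq_true]
      have ar : (y - (x + s1) = -s1) ↔ (x - y = 0) := by
        constructor <;> intro h <;> linear_combination -h
      rw [ar]
    · exact absurd (hor rfl) (show ¬ (1 : Fin 3) = 0 from by decide)
    · -- (1,2)
      rw [F1, F2]
      show G.Adj ((Φ φ (x + s1)) v) ((Φ φ (y + s1 + s2)) w) ↔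
        xor (decide (y - x = 0)) c2 = true
      rw [adj_shift φ hφ3, cc2 (y + s1 + s2 - (x + s1)), xor_decide_eq_true]
      have ar : (y + s1 + s2 - (x + s1) = s2) ↔ (y - x = 0) := by
        constructor <;> intro h <;> linear_combination h
      rw [ar]
    · -- (2,0)
      rw [F2, F0]
      show G.Adj ((Φ φ (x + s1 + s2)) w) ((Φ φ y) u) ↔ xor (decide (x - y = σ)) c3 = true
      rw [adj_shift φ hφ3, CC_symm hφ3 cc3 (y - (x + s1 + s2)), xor_decide_eq_true]
      have ar : (y - (x + s1 + s2) = -s3) ↔ (x - y = σ) := by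
        rw [hσdef]; constructor <;> intro h <;> linear_combination -h
      rw [ar]
    · -- (2,1)
      rw [F2, F1]
      show G.Adj ((Φ φ (x + s1 + s2)) w) ((Φ φ (y + s1)) v) ↔
        xor (decide (x - y = 0)) c2 = true
      rw [adj_shift φ hφ3, CC_symm hφ3 cc2 ((y + s1) - (x + s1 + s2)), xor_decide_eq_true]
      have ar : ((y + s1) - (x + s1 + s2) = -s2) ↔ (x - y = 0) := by
        constructor <;> intro h <;> linear_combination -h
      rw [ar]
    · exact absurd (hor rfl) (show ¬ (2 : Fin 3) = 0 from by decide)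
  -- orbit conditions for the witness pairs
  have hcond : ∀ k l : Fin 4, k ≠ l → ((wt k).1 = (wt l).1 → (wt k).1 = 0) := by
    intro k l hkl h
    exact (horb k l h).resolve_left hkl
  obtain ⟨e01, e12, e23, e02, e03, e13⟩ := hP4
  apply hfree
  refine mkP4 (fun k => F (wt k)) ?_ ?_ ?_ ?_ ?_ ?_ ?_
  · intro k l hkl
    exact hFinj (wt k) (wt l) (hdist k l hkl) (hcond k l hkl)
  · exact (hchar (wt 0) (wt 1) (hcond 0 1 (by decide))).mpr e01
  · exact (hchar (wt 1) (wt 2) (hcond 1 2 (by decide))).mpr e12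
  · exact (hchar (wt 2) (wt 3) (hcond 2 3 (by decide))).mpr e23
  · intro hadj
    have hb := (hchar (wt 0) (wt 2) (hcond 0 2 (by decide))).mp hadj
    rw [e02] at hb; exact Bool.noConfusion hb
  · intro hadj
    have hb := (hchar (wt 0) (wt 3) (hcond 0 3 (by decide))).mp hadj
    rw [e03] at hb; exact Bool.noConfusion hb
  · intro hadj
    have hb := (hchar (wt 1) (wt 3) (hcond 1 3 (by decide))).mp hadj
    rw [e13] at hb; exact Bool.noConfusion hb


omit hφ3 in
theorem fin4_cases : ∀ i : Fin 4, i = 0 ∨ i = 1 ∨ i = 2 ∨ i = 3 := by decide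

include hφ3 in
theorem L4 (hfree : ¬ Nonempty ((pathGraph 4) ↪g G)) {u v w z : V}
    (h1 : Constrained φ u v) (h2 : Constrained φ v w) (h3 : Constrained φ w z)
    (nuw : ¬ R φ u w) (cuw : ¬ Constrained φ u w)
    (nvz : ¬ R φ v z) (cvz : ¬ Constrained φ v z)
    (nuz : ¬ R φ u z) :
    Constrained φ u z ∧
      (pcs φ u z).2 = (pcs φ u v).2 + (pcs φ v w).2 + (pcs φ w z).2 := by
  classical
  by_contra hcon
  have cc1 : CC φ u v (pcs φ u v).1 (pcs φ u v).2 := pcs_spec h1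
  have cc2 : CC φ v w (pcs φ v w).1 (pcs φ v w).2 := pcs_spec h2
  have cc3 : CC φ w z (pcs φ w z).1 (pcs φ w z).2 := pcs_spec h3
  set c1 := (pcs φ u v).1
  set s1 := (pcs φ u v).2
  set c2 := (pcs φ v w).1
  set s2 := (pcs φ v w).2
  set c3 := (pcs φ w z).1
  set s3 := (pcs φ w z).2
  set aP : ZMod 3 → Prop := fun d => G.Adj u ((Φ φ (d + (s1 + s2 + s3))) z) with haP
  set a0 : Bool := decide (aP 0) with ha0
  set a1 : Bool := decide (aP 1) with ha1
  set a2 : Bool := decide (aP 2) with ha2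
  set f02 : Bool := decide (FullP φ u w) with hf02
  set f13 : Bool := decide (FullP φ v z) with hf13
  -- the chord (u,z) is not a "match at shift 0"
  have ha : ¬ (a1 = a2 ∧ a0 ≠ a1) := by
    by_cases hcz : Constrained φ u z
    · have hs : (pcs φ u z).2 ≠ s1 + s2 + s3 := fun h => hcon ⟨hcz, h⟩
      have cc4 : CC φ u z (pcs φ u z).1 (pcs φ u z).2 := pcs_spec hcz
      set c4 := (pcs φ u z).1
      set s4 := (pcs φ u z).2
      set σ' : ZMod 3 := s4 - (s1 + s2 + s3) with hσ'
      have hσ'ne : σ' ≠ 0 := sub_ne_zero.mpr hs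
      have e : ∀ d : ZMod 3, decide (aP d) = xor (decide (d = σ')) c4 := by
        intro d
        have h1' : aP d ↔ ((d = σ') ↔ c4 = false) := by
          rw [haP]
          show G.Adj u ((Φ φ (d + (s1 + s2 + s3))) z) ↔ _
          rw [cc4 (d + (s1 + s2 + s3))]
          have ar : (d + (s1 + s2 + s3) = s4) ↔ (d = σ') := by
            rw [hσ']; constructor <;> intro h <;> linear_combination h
          rw [ar]
        calc decide (aP d) = decide ((d = σ') ↔ c4 = false) := decide_eq_decide.mpr h1'
          _ = xor (decide (d = σ')) c4 := by cases c4 <;> simp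
      rintro ⟨hA, hB⟩
      rw [ha1, ha2, e 1, e 2] at hA
      rw [ha0, ha1, e 0, e 1] at hB
      rcases zmod3_cases σ' with h | h | h
      · exact hσ'ne h
      · rw [h] at hA
        rw [show (decide ((1 : ZMod 3) = 1)) = true from by decide,
          show (decide ((2 : ZMod 3) = 1)) = false from by decide] at hA
        simp at hA
      · rw [h] at hA
        rw [show (decide ((1 : ZMod 3) = 2)) = false from by decide,
          show (decide ((2 : ZMod 3) = 2)) = true from by decide] at hA
        simp at hA
    · have htri : FullP φ u z ∨ NoneP φ u z := by
        by_cases hf : FullP φ u z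
        · exact Or.inl hf
        · by_cases hn : NoneP φ u z
          · exact Or.inr hn
          · exact absurd ⟨nuz, hf, hn⟩ hcz
      rcases htri with hf | hn
      · rintro ⟨_, hB⟩
        apply hB
        rw [ha0, ha1, decide_eq_true (by rw [haP]; exact hf _ : aP 0),
          decide_eq_true (by rw [haP]; exact hf _ : aP 1)]
      · rintro ⟨_, hB⟩
        apply hB
        rw [ha0, ha1, decide_eq_false (by rw [haP]; exact hn _ : ¬ aP 0),
          decide_eq_false (by rw [haP]; exact hn _ : ¬ aP 1)]
  obtain ⟨wt, hdist, hP4⟩ := pure4 c1 c2 c3 f02 f13 a0 a1 a2 ha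
  set F : Fin 4 × ZMod 3 → V := fun p =>
    if p.1 = 0 then (Φ φ p.2) u else if p.1 = 1 then (Φ φ (p.2 + s1)) v
    else if p.1 = 2 then (Φ φ (p.2 + s1 + s2)) w
    else (Φ φ (p.2 + s1 + s2 + s3)) z with hFdef
  have F0 : ∀ x : ZMod 3, F (0, x) = (Φ φ x) u := fun x => rfl
  have F1 : ∀ x : ZMod 3, F (1, x) = (Φ φ (x + s1)) v := fun x => rfl
  have F2 : ∀ x : ZMod 3, F (2, x) = (Φ φ (x + s1 + s2)) w := fun x => rfl
  have F3 : ∀ x : ZMod 3, F (3, x) = (Φ φ (x + s1 + s2 + s3)) z := fun x => rfl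
  have nuv : ¬ R φ u v := h1.1
  have nvw : ¬ R φ v w := h2.1
  have nwz : ¬ R φ w z := h3.1
  have nvu : ¬ R φ v u := fun h => nuv (R_symm hφ3 h)
  have nwv : ¬ R φ w v := fun h => nvw (R_symm hφ3 h)
  have nzw : ¬ R φ z w := fun h => nwz (R_symm hφ3 h)
  have nwu : ¬ R φ w u := fun h => nuw (R_symm hφ3 h)
  have nzv : ¬ R φ z v := fun h => nvz (R_symm hφ3 h)
  have nzu : ¬ R φ z u := fun h => nuz (R_symm hφ3 h)
  have hFinj : ∀ p q : Fin 4 × ZMod 3, p.1 ≠ q.1 → F p ≠ F q := by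
    rintro ⟨i, x⟩ ⟨j, y⟩ hij
    rcases fin4_cases i with rfl | rfl | rfl | rfl <;>
      rcases fin4_cases j with rfl | rfl | rfl | rfl <;>
      first
        | exact absurd rfl hij
        | (rw [F0, F1]; exact ne_of_not_R hφ3 nuv _ _)
        | (rw [F0, F2]; exact ne_of_not_R hφ3 nuw _ _)
        | (rw [F0, F3]; exact ne_of_not_R hφ3 nuz _ _)
        | (rw [F1, F0]; exact ne_of_not_R hφ3 nvu _ _)
        | (rw [F1, F2]; exact ne_of_not_R hφ3 nvw _ _)
        | (rw [F1, F3]; exact ne_of_not_R hφ3 nvz _ _)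
        | (rw [F2, F0]; exact ne_of_not_R hφ3 nwu _ _)
        | (rw [F2, F1]; exact ne_of_not_R hφ3 nwv _ _)
        | (rw [F2, F3]; exact ne_of_not_R hφ3 nwz _ _)
        | (rw [F3, F0]; exact ne_of_not_R hφ3 nzu _ _)
        | (rw [F3, F1]; exact ne_of_not_R hφ3 nzv _ _)
        | (rw [F3, F2]; exact ne_of_not_R hφ3 nzw _ _)
  have hfull02 : ∀ (x y : ZMod 3), G.Adj ((Φ φ x) u) ((Φ φ (y + s1 + s2)) w) ↔ f02 = true := by
    intro x y
    by_cases hf : FullP φ u w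
    · have hT : f02 = true := by rw [hf02]; exact decide_eq_true hf
      rw [hT, adj_shift φ hφ3]
      exact ⟨fun _ => rfl, fun _ => hf _⟩
    · have hn : NoneP φ u w := by
        by_cases hn : NoneP φ u w
        · exact hn
        · exact absurd ⟨nuw, hf, hn⟩ cuw
      have hT : f02 = false := by rw [hf02]; exact decide_eq_false hf
      rw [hT, adj_shift φ hφ3]
      exact ⟨fun h => absurd h (hn _), fun h => Bool.noConfusion h⟩
  have hfull13 : ∀ (x y : ZMod 3),
      G.Adj ((Φ φ (x + s1)) v) ((Φ φ (y + s1 + s2 + s3)) z) ↔ f13 = true := by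
    intro x y
    by_cases hf : FullP φ v z
    · have hT : f13 = true := by rw [hf13]; exact decide_eq_true hf
      rw [hT, adj_shift φ hφ3]
      exact ⟨fun _ => rfl, fun _ => hf _⟩
    · have hn : NoneP φ v z := by
        by_cases hn : NoneP φ v z
        · exact hn
        · exact absurd ⟨nvz, hf, hn⟩ cvz
      have hT : f13 = false := by rw [hf13]; exact decide_eq_false hf
      rw [hT, adj_shift φ hφ3]
      exact ⟨fun h => absurd h (hn _), fun h => Bool.noConfusion h⟩
  have haF : ∀ d : ZMod 3, (aFun a0 a1 a2 d = true ↔ aP d) := by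
    intro d
    rcases zmod3_cases d with rfl | rfl | rfl
    · show (if (0 : ZMod 3) = 0 then a0 else _) = true ↔ _
      rw [if_pos rfl, ha0, decide_eq_true_iff]
    · show (if (1 : ZMod 3) = 0 then a0 else if (1 : ZMod 3) = 1 then a1 else a2) = true ↔ _
      rw [if_neg (by decide), if_pos rfl, ha1, decide_eq_true_iff]
    · show (if (2 : ZMod 3) = 0 then a0 else if (2 : ZMod 3) = 1 then a1 else a2) = true ↔ _
      rw [if_neg (by decide), if_neg (by decide), ha2, decide_eq_true_iff]
  have hchno : ∀ (x y : ZMod 3), G.Adj ((Φ φ x) u) ((Φ φ (y + s1 + s2 + s3)) z) ↔ aP (y - x) := by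
    intro x y
    rw [adj_shift φ hφ3, haP]
    show G.Adj u ((Φ φ (y + s1 + s2 + s3 - x)) z) ↔ G.Adj u ((Φ φ (y - x + (s1 + s2 + s3))) z)
    have ar : y + s1 + s2 + s3 - x = y - x + (s1 + s2 + s3) := by ring
    rw [ar]
  have hchar : ∀ p q : Fin 4 × ZMod 3, p.1 ≠ q.1 →
      (G.Adj (F p) (F q) ↔ mAdj4 c1 c2 c3 f02 f13 a0 a1 a2 p q = true) := by
    rintro ⟨i, x⟩ ⟨j, y⟩ hij
    rcases fin4_cases i with rfl | rfl | rfl | rfl <;>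
      rcases fin4_cases j with rfl | rfl | rfl | rfl
    · exact absurd rfl hij
    · -- (0,1)
      rw [F0, F1]
      show G.Adj ((Φ φ x) u) ((Φ φ (y + s1)) v) ↔ xor (decide (y - x = 0)) c1 = true
      rw [adj_shift φ hφ3, cc1 (y + s1 - x), xor_decide_eq_true]
      have ar : (y + s1 - x = s1) ↔ (y - x = 0) := by
        constructor <;> intro h <;> linear_combination h
      rw [ar]
    · -- (0,2)
      rw [F0, F2]
      show G.Adj ((Φ φ x) u) ((Φ φ (y + s1 + s2)) w) ↔ f02 = true
      exact hfull02 x y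
    · -- (0,3)
      rw [F0, F3]
      show G.Adj ((Φ φ x) u) ((Φ φ (y + s1 + s2 + s3)) z) ↔ aFun a0 a1 a2 (y - x) = true
      rw [hchno x y, haF (y - x)]
    · -- (1,0)
      rw [F1, F0]
      show G.Adj ((Φ φ (x + s1)) v) ((Φ φ y) u) ↔ xor (decide (x - y = 0)) c1 = true
      rw [adj_shift φ hφ3, CC_symm hφ3 cc1 (y - (x + s1)), xor_decide_eq_true]
      have ar : (y - (x + s1) = -s1) ↔ (x - y = 0) := by
        constructor <;> intro h <;> linear_combination -h
      rw [ar]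
    · exact absurd rfl hij
    · -- (1,2)
      rw [F1, F2]
      show G.Adj ((Φ φ (x + s1)) v) ((Φ φ (y + s1 + s2)) w) ↔ xor (decide (y - x = 0)) c2 = true
      rw [adj_shift φ hφ3, cc2 (y + s1 + s2 - (x + s1)), xor_decide_eq_true]
      have ar : (y + s1 + s2 - (x + s1) = s2) ↔ (y - x = 0) := by
        constructor <;> intro h <;> linear_combination h
      rw [ar]
    · -- (1,3)
      rw [F1, F3]
      show G.Adj ((Φ φ (x + s1)) v) ((Φ φ (y + s1 + s2 + s3)) z) ↔ f13 = true
      exact hfull13 x y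
    · -- (2,0)
      rw [F2, F0]
      show G.Adj ((Φ φ (x + s1 + s2)) w) ((Φ φ y) u) ↔ f02 = true
      rw [G.adj_comm]
      exact hfull02 y x
    · -- (2,1)
      rw [F2, F1]
      show G.Adj ((Φ φ (x + s1 + s2)) w) ((Φ φ (y + s1)) v) ↔ xor (decide (x - y = 0)) c2 = true
      rw [adj_shift φ hφ3, CC_symm hφ3 cc2 ((y + s1) - (x + s1 + s2)), xor_decide_eq_true]
      have ar : ((y + s1) - (x + s1 + s2) = -s2) ↔ (x - y = 0) := by
        constructor <;> intro h <;> linear_combination -h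
      rw [ar]
    · exact absurd rfl hij
    · -- (2,3)
      rw [F2, F3]
      show G.Adj ((Φ φ (x + s1 + s2)) w) ((Φ φ (y + s1 + s2 + s3)) z) ↔
        xor (decide (y - x = 0)) c3 = true
      rw [adj_shift φ hφ3, cc3 (y + s1 + s2 + s3 - (x + s1 + s2)), xor_decide_eq_true]
      have ar : (y + s1 + s2 + s3 - (x + s1 + s2) = s3) ↔ (y - x = 0) := by
        constructor <;> intro h <;> linear_combination h
      rw [ar]
    · -- (3,0)
      rw [F3, F0]
      show G.Adj ((Φ φ (x + s1 + s2 + s3)) z) ((Φ φ y) u) ↔ aFun a0 a1 a2 (x - y) = true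
      rw [G.adj_comm, hchno y x, haF (x - y)]
    · -- (3,1)
      rw [F3, F1]
      show G.Adj ((Φ φ (x + s1 + s2 + s3)) z) ((Φ φ (y + s1)) v) ↔ f13 = true
      rw [G.adj_comm]
      exact hfull13 y x
    · -- (3,2)
      rw [F3, F2]
      show G.Adj ((Φ φ (x + s1 + s2 + s3)) z) ((Φ φ (y + s1 + s2)) w) ↔
        xor (decide (x - y = 0)) c3 = true
      rw [adj_shift φ hφ3, CC_symm hφ3 cc3 ((y + s1 + s2) - (x + s1 + s2 + s3)), xor_decide_eq_true]
      have ar : ((y + s1 + s2) - (x + s1 + s2 + s3) = -s3) ↔ (x - y = 0) := by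
        constructor <;> intro h <;> linear_combination -h
      rw [ar]
    · exact absurd rfl hij
  obtain ⟨e01, e12, e23, e02, e03, e13⟩ := hP4
  apply hfree
  refine mkP4 (fun k => F (wt k)) ?_ ?_ ?_ ?_ ?_ ?_ ?_
  · intro k l hkl
    exact hFinj (wt k) (wt l) (hdist k l hkl)
  · exact (hchar (wt 0) (wt 1) (hdist 0 1 (by decide))).mpr e01
  · exact (hchar (wt 1) (wt 2) (hdist 1 2 (by decide))).mpr e12
  · exact (hchar (wt 2) (wt 3) (hdist 2 3 (by decide))).mpr e23
  · intro hadj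
    have hb := (hchar (wt 0) (wt 2) (hdist 0 2 (by decide))).mp hadj
    rw [e02] at hb; exact Bool.noConfusion hb
  · intro hadj
    have hb := (hchar (wt 0) (wt 3) (hdist 0 3 (by decide))).mp hadj
    rw [e03] at hb; exact Bool.noConfusion hb
  · intro hadj
    have hb := (hchar (wt 1) (wt 3) (hdist 1 3 (by decide))).mp hadj
    rw [e13] at hb; exact Bool.noConfusion hb


/-- shift between the orbits of two vertices (rep-based, orbit-invariant) -/
noncomputable def sh (φ : G ≃g G) (hφ3 : φ ^ 3 = 1) (a b : V) : ZMod 3 :=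
  (pcs φ (rep φ hφ3 a) (rep φ hφ3 b)).2

/-- the graph of constrained orbit pairs -/
def Hg (φ : G ≃g G) (hφ3 : φ ^ 3 = 1) : SimpleGraph V where
  Adj a b := Constrained φ a b
  symm := ⟨fun _ _ h => Constrained_symm hφ3 h⟩
  loopless := ⟨fun a h => h.1 (R_refl a)⟩

theorem sh_left_orbit {a a' b : V} (h : R φ a a') : sh φ hφ3 a b = sh φ hφ3 a' b := by
  unfold sh; rw [rep_eq_of_R hφ3 h]

theorem sh_right_orbit {a b b' : V} (h : R φ b b') : sh φ hφ3 a b = sh φ hφ3 a b' := by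
  unfold sh; rw [rep_eq_of_R hφ3 h]

theorem constrained_rep {a b : V} (h : Constrained φ a b) :
    Constrained φ (rep φ hφ3 a) (rep φ hφ3 b) :=
  (Constrained_invar hφ3 (rep_spec hφ3 a) (rep_spec hφ3 b)).mpr h

theorem sh_symm {a b : V} (h : Constrained φ a b) : sh φ hφ3 b a = - sh φ hφ3 a b := by
  unfold sh
  rw [pcs_symm hφ3 (constrained_rep hφ3 h)]

theorem TRI_sh (hfree : ¬ Nonempty ((pathGraph 4) ↪g G)) {a b c : V}
    (hab : Constrained φ a b) (hbc : Constrained φ b c) (hac : Constrained φ a c) :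
    sh φ hφ3 a c = sh φ hφ3 a b + sh φ hφ3 b c := by
  unfold sh
  exact TRI hφ3 hfree (constrained_rep hφ3 hab) (constrained_rep hφ3 hbc)
    (constrained_rep hφ3 hac)

theorem L4_sh (hfree : ¬ Nonempty ((pathGraph 4) ↪g G)) {u v w z : V}
    (h1 : Constrained φ u v) (h2 : Constrained φ v w) (h3 : Constrained φ w z)
    (nuw : ¬ R φ u w) (cuw : ¬ Constrained φ u w)
    (nvz : ¬ R φ v z) (cvz : ¬ Constrained φ v z)
    (nuz : ¬ R φ u z) :
    Constrained φ u z ∧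
      sh φ hφ3 u z = sh φ hφ3 u v + sh φ hφ3 v w + sh φ hφ3 w z := by
  have hru : R φ (rep φ hφ3 u) u := rep_spec hφ3 u
  have hrv : R φ (rep φ hφ3 v) v := rep_spec hφ3 v
  have hrw : R φ (rep φ hφ3 w) w := rep_spec hφ3 w
  have hrz : R φ (rep φ hφ3 z) z := rep_spec hφ3 z
  have key := L4 hφ3 hfree
    ((Constrained_invar hφ3 hru hrv).mpr h1)
    ((Constrained_invar hφ3 hrv hrw).mpr h2)
    ((Constrained_invar hφ3 hrw hrz).mpr h3)
    (fun h => nuw ((R_invar hφ3 hru hrw).mp h))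
    (fun h => cuw ((Constrained_invar hφ3 hru hrw).mp h))
    (fun h => nvz ((R_invar hφ3 hrv hrz).mp h))
    (fun h => cvz ((Constrained_invar hφ3 hrv hrz).mp h))
    (fun h => nuz ((R_invar hφ3 hru hrz).mp h))
  exact ⟨(Constrained_invar hφ3 hru hrz).mp key.1, key.2⟩

end mainlemmas

section walks
variable {V : Type*} {G : SimpleGraph V} {φ : G ≃g G} {hφ3 : φ ^ 3 = 1}

/-- sum of shifts along a walk in the constrained-pairs graph -/
noncomputable def wsum : ∀ {a b : V}, (Hg φ hφ3).Walk a b → ZMod 3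
  | _, _, SimpleGraph.Walk.nil => 0
  | a, _, SimpleGraph.Walk.cons (v := c) _ p => sh φ hφ3 a c + wsum p

@[simp] theorem wsum_nil {a : V} : wsum (hφ3 := hφ3) (SimpleGraph.Walk.nil : (Hg φ hφ3).Walk a a) = 0 := rfl

@[simp] theorem wsum_cons {a c b : V} (h : (Hg φ hφ3).Adj a c) (p : (Hg φ hφ3).Walk c b) :
    wsum (SimpleGraph.Walk.cons h p) = sh φ hφ3 a c + wsum p := rfl

theorem wsum_append {a b c : V} (p : (Hg φ hφ3).Walk a b) (q : (Hg φ hφ3).Walk b c) :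
    wsum (p.append q) = wsum p + wsum q := by
  induction p with
  | nil => simp
  | cons h p ih => simp [SimpleGraph.Walk.cons_append, ih]; ring

theorem wsum_reverse {a b : V} (p : (Hg φ hφ3).Walk a b) :
    wsum p.reverse = - wsum p := by
  induction p with
  | nil => simp
  | cons h p ih =>
    rw [SimpleGraph.Walk.reverse_cons, wsum_append, ih, wsum_cons, wsum_nil]
    rw [sh_symm hφ3 h, wsum_cons]
    ring

/-- The key lemma: the sum of shifts along any walk between two vertices
of the same orbit vanishes. -/
theorem keyZero (hfree : ¬ Nonempty ((pathGraph 4) ↪g G)) :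
    ∀ (n : ℕ) {a b : V} (p : (Hg φ hφ3).Walk a b), p.length ≤ n → R φ a b → wsum p = 0 := by
  intro n
  induction n with
  | zero =>
    intro a b p hlen hR
    cases p with
    | nil => rfl
    | cons h q => simp [SimpleGraph.Walk.length_cons] at hlen
  | succ n ih =>
    intro a b p hlen hR
    cases p with
    | nil => rfl
    | cons h1 p1 =>
      rename_i c
      cases p1 with
      | nil => exact absurd hR h1.1
      | cons h2 p2 =>
        rename_i d
        rw [SimpleGraph.Walk.length_cons, SimpleGraph.Walk.length_cons] at hlen
        by_cases hr : R φ a d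
        · have cancel : sh φ hφ3 c d = - sh φ hφ3 a c := by
            rw [sh_right_orbit hφ3 (R_symm hφ3 hr)]
            exact sh_symm hφ3 h1
          have hRdb : R φ d b := R_trans hφ3 (R_symm hφ3 hr) hR
          have hz := ih p2 (by omega) hRdb
          rw [wsum_cons, wsum_cons, cancel, hz]
          ring
        · by_cases hcr : Constrained φ a d
          · have hTRI := TRI_sh hφ3 hfree h1 h2 hcr
            have hz := ih (SimpleGraph.Walk.cons (id hcr : (Hg φ hφ3).Adj a d) p2) (by
              rw [SimpleGraph.Walk.length_cons]; omega) hR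
            rw [wsum_cons] at hz
            rw [wsum_cons, wsum_cons]
            rw [hTRI] at hz
            linear_combination hz
          · cases p2 with
            | nil => exact absurd hR hr
            | cons h3 p3 =>
              rename_i e'
              rw [SimpleGraph.Walk.length_cons] at hlen
              by_cases hce : R φ c e'
              · have hAdj_ae : (Hg φ hφ3).Adj a e' :=
                  (Constrained_invar hφ3 (R_refl a) hce).mp h1
                have hz := ih (SimpleGraph.Walk.cons hAdj_ae p3) (by
                  rw [SimpleGraph.Walk.length_cons]; omega) hR
                rw [wsum_cons] at hz
                have e1 : sh φ hφ3 a e' = sh φ hφ3 a c := (sh_right_orbit hφ3 hce).symm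
                have e2 : sh φ hφ3 d e' = - sh φ hφ3 c d := by
                  rw [sh_right_orbit hφ3 (R_symm hφ3 hce)]
                  exact sh_symm hφ3 h2
                rw [wsum_cons, wsum_cons, wsum_cons, e2]
                rw [e1] at hz
                linear_combination hz
              · by_cases hcce : Constrained φ c e'
                · have hTRI := TRI_sh hφ3 hfree h2 h3 hcce
                  have hz := ih (SimpleGraph.Walk.cons h1 (SimpleGraph.Walk.cons
                    (id hcce : (Hg φ hφ3).Adj c e') p3)) (by
                      rw [SimpleGraph.Walk.length_cons, SimpleGraph.Walk.length_cons]; omega) hR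
                  rw [wsum_cons, wsum_cons] at hz
                  rw [wsum_cons, wsum_cons, wsum_cons]
                  rw [hTRI] at hz
                  linear_combination hz
                · have hnae : ¬ R φ a e' := by
                    intro hre
                    exact hcce ((Constrained_invar hφ3 (R_refl c) hre).mp
                      (Constrained_symm hφ3 h1))
                  obtain ⟨hc_ae, hsum⟩ := L4_sh hφ3 hfree h1 h2 h3 hr hcr hce hcce hnae
                  have hz := ih (SimpleGraph.Walk.cons (id hc_ae : (Hg φ hφ3).Adj a e') p3) (by
                    rw [SimpleGraph.Walk.length_cons]; omega) hR
                  rw [wsum_cons] at hz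
                  rw [wsum_cons, wsum_cons, wsum_cons]
                  rw [hsum] at hz
                  linear_combination hz

theorem wsum_welldef (hfree : ¬ Nonempty ((pathGraph 4) ↪g G)) {x y : V}
    (p q : (Hg φ hφ3).Walk x y) : wsum p = wsum q := by
  have hz := keyZero (hφ3 := hφ3) hfree ((p.append q.reverse).length)
    (p.append q.reverse) le_rfl (R_refl x)
  rw [wsum_append, wsum_reverse] at hz
  linear_combination hz

end walks


section potential
variable {φ : G ≃g G} {hφ3 : φ ^ 3 = 1}

theorem wsum_welldef' (hfree : ¬ Nonempty ((pathGraph 4) ↪g G)) {x x' y : V}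
    (hxx' : R φ x x') (p : (Hg φ hφ3).Walk x y) (q : (Hg φ hφ3).Walk x' y) :
    wsum p = wsum q := by
  have hz := keyZero (hφ3 := hφ3) hfree ((p.append q.reverse).length)
    (p.append q.reverse) le_rfl hxx'
  rw [wsum_append, wsum_reverse] at hz
  linear_combination hz

end potential

noncomputable def cmp (φ : G ≃g G) (hφ3 : φ ^ 3 = 1) (v : V) : V :=
  ((Hg φ hφ3).connectedComponentMk v).out

theorem cmp_reachable {φ : G ≃g G} {hφ3 : φ ^ 3 = 1} (v : V) :
    (Hg φ hφ3).Reachable (cmp φ hφ3 v) v := by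
  apply SimpleGraph.ConnectedComponent.exact
  exact ((Hg φ hφ3).connectedComponentMk v).out_eq

noncomputable def pot (φ : G ≃g G) (hφ3 : φ ^ 3 = 1) (v : V) : ZMod 3 :=
  wsum ((cmp_reachable (φ := φ) (hφ3 := hφ3) v).some)

section potential2
variable {φ : G ≃g G} {hφ3 : φ ^ 3 = 1}

theorem cmp_eq_of_reachable {a b : V} (h : (Hg φ hφ3).Reachable a b) :
    cmp φ hφ3 a = cmp φ hφ3 b := by
  unfold cmp
  rw [SimpleGraph.ConnectedComponent.sound h]

theorem pot_adj (hfree : ¬ Nonempty ((pathGraph 4) ↪g G)) {a b : V}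
    (h : (Hg φ hφ3).Adj a b) :
    pot φ hφ3 b = pot φ hφ3 a + sh φ hφ3 a b := by
  have hc : cmp φ hφ3 a = cmp φ hφ3 b := cmp_eq_of_reachable h.reachable
  set pa := (cmp_reachable (φ := φ) (hφ3 := hφ3) a).some with hpa
  set pb := (cmp_reachable (φ := φ) (hφ3 := hφ3) b).some with hpb
  have hr : R φ (cmp φ hφ3 b) (cmp φ hφ3 a) := by rw [hc]; exact R_refl _
  have hwd := wsum_welldef' (hφ3 := hφ3) hfree hr pb
    (pa.append (SimpleGraph.Walk.cons h SimpleGraph.Walk.nil))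
  show wsum pb = wsum pa + sh φ hφ3 a b
  rw [hwd, wsum_append, wsum_cons, wsum_nil]
  ring

theorem wsum_from_isolated {a x : V} (hiso : ∀ y, ¬ (Hg φ hφ3).Adj a y)
    (q : (Hg φ hφ3).Walk a x) : wsum q = 0 := by
  cases q with
  | nil => rfl
  | cons h _ => exact absurd h (hiso _)

theorem pot_isolated {a : V} (hiso : ∀ y, ¬ (Hg φ hφ3).Adj a y) : pot φ hφ3 a = 0 := by
  set pa := (cmp_reachable (φ := φ) (hφ3 := hφ3) a).some with hpa
  show wsum pa = 0
  have h1 := wsum_reverse (hφ3 := hφ3) pa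
  have h2 := wsum_from_isolated (hφ3 := hφ3) hiso pa.reverse
  rw [h2] at h1
  linear_combination h1

theorem pot_orbit (hfree : ¬ Nonempty ((pathGraph 4) ↪g G)) {a b : V}
    (h : R φ a b) : pot φ hφ3 a = pot φ hφ3 b := by
  by_cases hiso : ∃ y, (Hg φ hφ3).Adj a y
  · obtain ⟨y, hy⟩ := hiso
    have hby : (Hg φ hφ3).Adj b y := (Constrained_invar hφ3 h (R_refl y)).mp hy
    set pa := (cmp_reachable (φ := φ) (hφ3 := hφ3) a).some with hpa
    have hr : R φ (cmp φ hφ3 b) (cmp φ hφ3 a) := by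
      have hreach : (Hg φ hφ3).Reachable a b :=
        SimpleGraph.Walk.reachable (SimpleGraph.Walk.cons hy
          (SimpleGraph.Walk.cons ((Hg φ hφ3).adj_symm hby) SimpleGraph.Walk.nil))
      rw [cmp_eq_of_reachable hreach]; exact R_refl _
    have hwd := wsum_welldef' (hφ3 := hφ3) hfree hr
      ((cmp_reachable (φ := φ) (hφ3 := hφ3) b).some)
      (pa.append (SimpleGraph.Walk.cons hy
        (SimpleGraph.Walk.cons ((Hg φ hφ3).adj_symm hby) SimpleGraph.Walk.nil)))
    show wsum pa = wsum ((cmp_reachable (φ := φ) (hφ3 := hφ3) b).some)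
    rw [hwd, wsum_append, wsum_cons, wsum_cons, wsum_nil]
    have e2 : sh φ hφ3 y b = - sh φ hφ3 a y := by
      rw [sh_right_orbit hφ3 (R_symm hφ3 h)]
      exact sh_symm hφ3 hy
    rw [e2]
    ring
  · push_neg at hiso
    have hisob : ∀ y, ¬ (Hg φ hφ3).Adj b y := by
      intro y hby
      exact hiso y ((Constrained_invar hφ3 (R_symm hφ3 h) (R_refl y)).mp hby)
    rw [pot_isolated hiso, pot_isolated hisob]

end potential2


noncomputable def coordv (φ : G ≃g G) (hφ3 : φ ^ 3 = 1) (v : V) : ZMod 3 :=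
  Classical.choose (rep_spec hφ3 v)

theorem coordv_spec {φ : G ≃g G} (hφ3 : φ ^ 3 = 1) (v : V) :
    (Φ φ (coordv φ hφ3 v)) (rep φ hφ3 v) = v :=
  Classical.choose_spec (rep_spec hφ3 v)

noncomputable def τf (φ : G ≃g G) (hφ3 : φ ^ 3 = 1) (v : V) : V :=
  (Φ φ (2 * pot φ hφ3 v - coordv φ hφ3 v)) (rep φ hφ3 v)

section tau
variable {φ : G ≃g G} {hφ3 : φ ^ 3 = 1}

theorem rep_fixed {v : V} (hv : φ v = v) : rep φ hφ3 v = v := by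
  obtain ⟨d, hd⟩ := R_symm hφ3 (rep_spec hφ3 v)
  rw [← hd, fixed_Φ hv]

theorem τf_fixed {v : V} (hv : φ v = v) : τf φ hφ3 v = v := by
  unfold τf
  rw [rep_fixed hv, fixed_Φ hv]

theorem rep_moved {v : V} (hv : φ v ≠ v) : φ (rep φ hφ3 v) ≠ rep φ hφ3 v :=
  moved_of_R hφ3 hv (R_symm hφ3 (rep_spec hφ3 v))

theorem τf_orbit (v : V) : R φ v (τf φ hφ3 v) :=
  R_trans hφ3 (R_symm hφ3 (rep_spec hφ3 v)) ⟨_, rfl⟩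

theorem τf_invol (hfree : ¬ Nonempty ((pathGraph 4) ↪g G)) (v : V) :
    τf φ hφ3 (τf φ hφ3 v) = v := by
  by_cases hv : φ v = v
  · rw [τf_fixed hv, τf_fixed hv]
  · have hr3 := rep_moved (hφ3 := hφ3) hv
    have hRv : R φ v (τf φ hφ3 v) := τf_orbit v
    have hrep2 : rep φ hφ3 (τf φ hφ3 v) = rep φ hφ3 v := (rep_eq_of_R hφ3 hRv).symm
    have hpot2 : pot φ hφ3 (τf φ hφ3 v) = pot φ hφ3 v := (pot_orbit hfree hRv).symm
    have hcoord2 : coordv φ hφ3 (τf φ hφ3 v) = 2 * pot φ hφ3 v - coordv φ hφ3 v := by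
      apply Φ_inj hφ3 hr3
      have h1 := coordv_spec hφ3 (τf φ hφ3 v)
      rw [hrep2] at h1
      rw [h1]
      rfl
    show (Φ φ (2 * pot φ hφ3 (τf φ hφ3 v) - coordv φ hφ3 (τf φ hφ3 v)))
      (rep φ hφ3 (τf φ hφ3 v)) = v
    rw [hrep2, hpot2, hcoord2]
    have har : 2 * pot φ hφ3 v - (2 * pot φ hφ3 v - coordv φ hφ3 v) = coordv φ hφ3 v := by ring
    rw [har]
    exact coordv_spec hφ3 v

theorem τf_ne (hfree : ¬ Nonempty ((pathGraph 4) ↪g G)) (ha : ∃ a, φ a ≠ a) :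
    ∃ v, τf φ hφ3 v ≠ v := by
  obtain ⟨a, hv⟩ := ha
  by_contra hall
  push_neg at hall
  have hr3 := rep_moved (hφ3 := hφ3) hv
  set r := rep φ hφ3 a with hrdef
  have key : ∀ x : ZMod 3, 2 * pot φ hφ3 r - x = x := by
    intro x
    have hRx : R φ r ((Φ φ x) r) := ⟨x, rfl⟩
    have hrepx : rep φ hφ3 ((Φ φ x) r) = r := by
      rw [← rep_eq_of_R hφ3 hRx, hrdef, rep_rep]
    have hcoordx : coordv φ hφ3 ((Φ φ x) r) = x := by
      apply Φ_inj hφ3 hr3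
      have h1 := coordv_spec hφ3 ((Φ φ x) r)
      rw [hrepx] at h1
      rw [h1]
    have hpotx : pot φ hφ3 ((Φ φ x) r) = pot φ hφ3 r := (pot_orbit hfree hRx).symm
    have htau := hall ((Φ φ x) r)
    unfold τf at htau
    rw [hrepx, hcoordx, hpotx] at htau
    exact Φ_inj hφ3 hr3 htau
  have e0 := key 0
  have e1 := key 1
  have : (0 : ZMod 3) = 2 := by linear_combination e1 - e0
  exact absurd this (by decide)

omit hφ3 in
theorem internal_both (h3 : φ ^ 3 = 1) {r : V} {a b : ZMod 3} (hab : a ≠ b) :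
    G.Adj ((Φ φ a) r) ((Φ φ b) r) ↔ G.Adj r (φ r) := by
  rw [adj_shift φ h3, internal_char h3 (sub_ne_zero.mpr (Ne.symm hab))]

theorem τf_adj (hfree : ¬ Nonempty ((pathGraph 4) ↪g G)) (u' v' : V) :
    G.Adj (τf φ hφ3 u') (τf φ hφ3 v') ↔ G.Adj u' v' := by
  have hu'eq : (Φ φ (coordv φ hφ3 u')) (rep φ hφ3 u') = u' := coordv_spec hφ3 u'
  have hv'eq : (Φ φ (coordv φ hφ3 v')) (rep φ hφ3 v') = v' := coordv_spec hφ3 v'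
  by_cases hR : R φ u' v'
  · by_cases hu : φ u' = u'
    · have hveq : v' = u' := by
        obtain ⟨d, hd⟩ := hR
        rw [← hd, fixed_Φ hu]
      subst hveq
      exact iff_of_false G.irrefl G.irrefl
    · have hr3 := rep_moved (hφ3 := hφ3) hu
      have hrep : rep φ hφ3 v' = rep φ hφ3 u' := (rep_eq_of_R hφ3 hR).symm
      have hpot : pot φ hφ3 v' = pot φ hφ3 u' := (pot_orbit hfree hR).symm
      set r := rep φ hφ3 u' with hrdef
      set x := coordv φ hφ3 u'
      set y := coordv φ hφ3 v'
      have hv'r : (Φ φ y) r = v' := by rw [hrep] at hv'eq; exact hv'eq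
      by_cases hxy : x = y
      · have : u' = v' := by rw [← hu'eq, ← hv'r, hxy]
        subst this
        exact iff_of_false (G.irrefl) G.irrefl
      · have lhs : G.Adj (τf φ hφ3 u') (τf φ hφ3 v') ↔ G.Adj r (φ r) := by
          show G.Adj ((Φ φ (2 * pot φ hφ3 u' - x)) r)
            ((Φ φ (2 * pot φ hφ3 v' - y)) (rep φ hφ3 v')) ↔ _
          rw [hrep, hpot]
          exact internal_both hφ3 (fun h => hxy (by linear_combination -h))
        have rhs : G.Adj u' v' ↔ G.Adj r (φ r) := by
          rw [← hu'eq, ← hv'r]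
          exact internal_both hφ3 hxy
        rw [lhs, rhs]
  · set r := rep φ hφ3 u' with hrdef
    set r' := rep φ hφ3 v' with hr'def
    have hnr : ¬ R φ r r' := fun h =>
      hR ((R_invar hφ3 (rep_spec hφ3 u') (rep_spec hφ3 v')).mp h)
    set x := coordv φ hφ3 u'
    set y := coordv φ hφ3 v'
    have hP : pot φ hφ3 u' = pot φ hφ3 r := pot_orbit hfree (R_symm hφ3 (rep_spec hφ3 u'))
    have hP' : pot φ hφ3 v' = pot φ hφ3 r' := pot_orbit hfree (R_symm hφ3 (rep_spec hφ3 v'))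
    by_cases hf : FullP φ r r'
    · apply iff_of_true
      · show G.Adj ((Φ φ (2 * pot φ hφ3 u' - x)) r) ((Φ φ (2 * pot φ hφ3 v' - y)) r')
        rw [adj_shift φ hφ3]; exact hf _
      · rw [← hu'eq, ← hv'eq, adj_shift φ hφ3]; exact hf _
    · by_cases hn : NoneP φ r r'
      · apply iff_of_false
        · show ¬ G.Adj ((Φ φ (2 * pot φ hφ3 u' - x)) r) ((Φ φ (2 * pot φ hφ3 v' - y)) r')
          rw [adj_shift φ hφ3]; exact hn _
        · rw [← hu'eq, ← hv'eq, adj_shift φ hφ3]; exact hn _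
      · have hc : Constrained φ r r' := ⟨hnr, hf, hn⟩
        have cc := pcs_spec hc
        set c := (pcs φ r r').1
        set s := (pcs φ r r').2
        have hsh : sh φ hφ3 r r' = s := by
          unfold sh
          rw [hrdef, hr'def, rep_rep, rep_rep]
        have hpadj := pot_adj (hφ3 := hφ3) hfree (hc : (Hg φ hφ3).Adj r r')
        rw [hsh] at hpadj
        have lhs : G.Adj (τf φ hφ3 u') (τf φ hφ3 v') ↔
            (((2 * pot φ hφ3 v' - y) - (2 * pot φ hφ3 u' - x) = s) ↔ c = false) := by
          show G.Adj ((Φ φ (2 * pot φ hφ3 u' - x)) r) ((Φ φ (2 * pot φ hφ3 v' - y)) r') ↔ _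
          rw [adj_shift φ hφ3, cc _]
        have rhs : G.Adj u' v' ↔ ((y - x = s) ↔ c = false) := by
          rw [← hu'eq, ← hv'eq, adj_shift φ hφ3, cc _]
        rw [lhs, rhs]
        have har : ((2 * pot φ hφ3 v' - y) - (2 * pot φ hφ3 u' - x) = s) ↔ (y - x = s) := by
          rw [hP, hP']
          constructor <;> intro h <;> linear_combination - h + 2 * hpadj
        rw [har]

end tau
end AutCograph

open AutCograph in
/-- For every cograph `G` (a `pathGraph 4`-free simple graph) on a
countable vertex type, the automorphism group `G ≃g G` of `G` is not isomorphic, as a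
group, to the cyclic group of order 3 (`ℤ/3ℤ`). -/
theorem aut_cograph_not_zmod_three {V : Type*} [Countable V]
    (G : SimpleGraph V) (hfree : ¬ Nonempty (pathGraph 4 ↪g G)) :
    ¬ Nonempty ((G ≃g G) ≃* Multiplicative (ZMod 3)) := by
  rintro ⟨e⟩
  set φ : G ≃g G := e.symm (Multiplicative.ofAdd (1 : ZMod 3)) with hφdef
  have hφ3 : φ ^ 3 = 1 := by
    rw [hφdef, ← map_pow]
    have h1 : (Multiplicative.ofAdd (1 : ZMod 3)) ^ 3 = 1 := by decide
    rw [h1, map_one]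
  have hφne : φ ≠ 1 := by
    intro h
    have h5 : e φ = Multiplicative.ofAdd (1 : ZMod 3) := by
      rw [hφdef]; exact e.apply_symm_apply _
    rw [h, map_one] at h5
    exact absurd h5.symm (by decide)
  have ha : ∃ a, φ a ≠ a := by
    by_contra hall
    push_neg at hall
    apply hφne
    ext v
    exact hall v
  have hinv : Function.Involutive (τf φ hφ3) := fun v => τf_invol (hφ3 := hφ3) hfree v
  set τiso : G ≃g G :=
    { toEquiv := hinv.toPerm
      map_rel_iff' := fun {a b} => τf_adj (hφ3 := hφ3) hfree a b } with hτdef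
  have hτ2 : τiso * τiso = 1 := by
    ext v
    exact hinv v
  have hτne : τiso ≠ 1 := by
    obtain ⟨v, hv⟩ := τf_ne (hφ3 := hφ3) hfree ha
    intro h
    apply hv
    have : τiso v = (1 : G ≃g G) v := by rw [h]
    exact this
  have hy : e τiso * e τiso = 1 := by rw [← map_mul, hτ2, map_one]
  have hone : e τiso = 1 := by
    have hd : ∀ y : Multiplicative (ZMod 3), y * y = 1 → y = 1 := by decide
    exact hd _ hy
  apply hτne
  have h4 := congrArg e.symm hone
  simpa using h4
end

section
/- For a partial order P, let L(P) be the partial order on the disjoint sum P ⊕ (P × ℕ) defined by: inl p ≤ inl q iff p ≤ q in P; inl p ≤ inr (q, n) iff p ≤ q in P; inr (p, n) ≤ inr (q, m) iff p = q and n = m; and never inr (p, n) ≤ inl q. (L(P) is obtained from P by attaching infinitely many new maximal elements above each point of P.) Then for any partial orders P and Q, L(P) is order-isomorphic to L(Q) if and only if P is order-isomorphic to Q. -/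
/-- The carrier of `L(P)`: the disjoint sum `P ⊕ (P × ℕ)` (a type synonym, so that we can
endow it with the order described below). -/
def LType (P : Type*) : Type _ := P ⊕ (P × ℕ)

/-- The order `L(P)` on `P ⊕ (P × ℕ)`: `inl p ≤ inl q` iff `p ≤ q`; `inl p ≤ inr (q, n)`
iff `p ≤ q`; `inr (p, n) ≤ inr (q, m)` iff `p = q ∧ n = m`; and never
`inr (p, n) ≤ inl q`. This attaches infinitely many new maximal elements above each point
of `P`. -/
instance LType.instPartialOrder (P : Type*) [PartialOrder P] : PartialOrder (LType P) where
  le x y :=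
    match x, y with
    | .inl p, .inl q => p ≤ q
    | .inl p, .inr (q, _) => p ≤ q
    | .inr (p, n), .inr (q, m) => p = q ∧ n = m
    | .inr _, .inl _ => False
  le_refl x := by cases x with
    | inl p => exact le_refl p
    | inr p => exact ⟨rfl, rfl⟩
  le_trans x y z hxy hyz := by
    cases x with
    | inl p =>
      cases y with
      | inl q =>
        cases z with
        | inl r => exact le_trans hxy hyz
        | inr r => exact le_trans hxy hyz
      | inr q =>
        cases z with
        | inl r => exact absurd hyz (by cases q; exact not_false)
        | inr r =>
          obtain ⟨q1, q2⟩ := q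
          obtain ⟨r1, r2⟩ := r
          obtain ⟨h1, h2⟩ := hyz
          exact le_trans hxy (le_of_eq h1)
    | inr p =>
      cases y with
      | inl q => exact absurd hxy (by cases p; exact not_false)
      | inr q =>
        cases z with
        | inl r => exact absurd hyz (by cases q; exact not_false)
        | inr r =>
          obtain ⟨p1, p2⟩ := p
          obtain ⟨q1, q2⟩ := q
          obtain ⟨r1, r2⟩ := r
          obtain ⟨h1, h2⟩ := hxy
          obtain ⟨h3, h4⟩ := hyz
          exact ⟨h1.trans h3, h2.trans h4⟩
  le_antisymm x y hxy hyx := by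
    cases x with
    | inl p =>
      cases y with
      | inl q => exact congrArg Sum.inl (le_antisymm hxy hyx)
      | inr q => exact absurd hyx (by cases q; exact not_false)
    | inr p =>
      cases y with
      | inl q => exact absurd hxy (by cases p; exact not_false)
      | inr q =>
        obtain ⟨p1, p2⟩ := p
        obtain ⟨q1, q2⟩ := q
        obtain ⟨h1, h2⟩ := hxy
        exact congrArg Sum.inr (by rw [h1, h2])


namespace LTypeAux

variable {P Q : Type*} [PartialOrder P] [PartialOrder Q]

lemma le_inl_iff {p q : P} :
    @LE.le (LType P) _ (Sum.inl p) (Sum.inl q) ↔ p ≤ q := Iff.rfl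

lemma not_inr_le_inl {p q : P} {n : ℕ} :
    ¬ @LE.le (LType P) _ (Sum.inr (p, n)) (Sum.inl q) := fun h => h

lemma inr_maximal {p : P} {n : ℕ} {y : LType P} (h : @LE.le (LType P) _ (Sum.inr (p, n)) y) :
    y = Sum.inr (p, n) := by
  cases y with
  | inl q => exact absurd h not_inr_le_inl
  | inr q =>
    obtain ⟨q1, q2⟩ := q
    obtain ⟨h1, h2⟩ := (h : p = q1 ∧ n = q2)
    rw [h1, h2]

lemma exists_inl (e : LType P ≃o LType Q) (p : P) : ∃ q : Q, e (Sum.inl p) = Sum.inl q := by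
  cases he : e (Sum.inl p) with
  | inl q => exact ⟨q, rfl⟩
  | inr q =>
    exfalso
    obtain ⟨q1, q2⟩ := q
    have hlt : @LT.lt (LType P) _ (Sum.inl p) (Sum.inr (p, 0)) :=
      lt_of_le_not_ge (le_refl p) not_inr_le_inl
    have := e.strictMono hlt
    rw [he] at this
    exact absurd (inr_maximal this.le).symm this.ne

end LTypeAux

/-- For partial orders `P` and `Q`, the order `L(P)` (obtained from `P`
by attaching infinitely many new maximal elements above each point of `P`) is
order-isomorphic to `L(Q)` if and only if `P` is order-isomorphic to `Q`. -/
theorem lType_orderIso_iff {P Q : Type*} [PartialOrder P] [PartialOrder Q] :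
    Nonempty (LType P ≃o LType Q) ↔ Nonempty (P ≃o Q) := by
  constructor
  · rintro ⟨e⟩
    choose f hf using LTypeAux.exists_inl e
    choose g hg using LTypeAux.exists_inl e.symm
    refine ⟨⟨⟨f, g, ?_, ?_⟩, ?_⟩⟩
    · intro p
      have : e.symm (e (Sum.inl p)) = Sum.inl p := e.symm_apply_apply _
      rw [hf p, hg (f p)] at this
      exact Sum.inl.inj this
    · intro q
      have : e (e.symm (Sum.inl q)) = Sum.inl q := e.apply_symm_apply _
      rw [hg q, hf (g q)] at this
      exact Sum.inl.inj this
    · intro p p'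
      constructor
      · intro h
        have : e (Sum.inl p) ≤ e (Sum.inl p') := by rw [hf p, hf p']; exact h
        exact e.le_iff_le.mp this
      · intro h
        have : e (Sum.inl p) ≤ e (Sum.inl p') := e.le_iff_le.mpr h
        rw [hf p, hf p'] at this
        exact this
  · rintro ⟨e⟩
    refine ⟨⟨Equiv.sumCongr e.toEquiv (Equiv.prodCongr e.toEquiv (Equiv.refl ℕ)), ?_⟩⟩
    rintro (p | ⟨p, n⟩) (q | ⟨q, m⟩)
    · exact e.le_iff_le
    · exact e.le_iff_le
    · exact Iff.rfl
    · show e p = e q ∧ n = m ↔ p = q ∧ n = m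
      simp [e.injective.eq_iff]
end
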